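/- arXiv:1512.02424 — 4 statements merged into one kernel-verified Lean document; each statement's English description precedes it below -/
import Mathlib

section
/- Let μ > 0. Let V, w : ℝ × [−1, 0] → ℝ be continuously differentiable on the closed strip S = ℝ × (−1, 0), with (V, w) square integrable on S, satisfying √μ ∂ₓ V + ∂_z w = 0 and ∂_z V − √μ ∂ₓ w = 0 on S, together with the boundary conditions w(x, −1) = 0 and w(x, 0) = 0 for all x ∈ ℝ. Then V = 0 and w = 0 identically on S. -/
open MeasureTheory Set intervalIntegral Metric Topology Filter

lemma aux_ray_zero (q q1 q2 : ℝ → ℝ)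
    (hq : ∀ x, HasDerivAt q (q1 x) x)
    (hq1 : ∀ x, HasDerivAt q1 (q2 x) x)
    (h2 : ∀ x, 0 ≤ q2 x) (h0 : ∀ x, 0 ≤ q x)
    (hint : Integrable q) : ∀ x, q x = 0 := by
  intro x₀
  have hdq : ∀ x, deriv q x = q1 x := fun x => (hq x).deriv
  have hq1mono : Monotone q1 :=
    monotone_of_deriv_nonneg (fun x => (hq1 x).differentiableAt)
      (fun x => by rw [(hq1 x).deriv]; exact h2 x)
  have key : ∃ r : Set ℝ, MeasurableSet r ∧ volume r = ⊤ ∧ ∀ x ∈ r, q x₀ ≤ q x := by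
    rcases le_or_gt 0 (q1 x₀) with h | h
    · refine ⟨Ici x₀, measurableSet_Ici, Real.volume_Ici, ?_⟩
      have hm : MonotoneOn q (Ici x₀) := by
        refine monotoneOn_of_deriv_nonneg (convex_Ici x₀)
          (fun x _ => (hq x).differentiableAt.continuousAt.continuousWithinAt)
          (fun x _ => (hq x).differentiableAt.differentiableWithinAt) ?_
        intro x hx
        rw [interior_Ici] at hx
        rw [hdq]
        exact le_trans h (hq1mono (le_of_lt hx))
      exact fun x hx => hm self_mem_Ici hx hx
    · refine ⟨Iic x₀, measurableSet_Iic, Real.volume_Iic, ?_⟩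
      have hm : AntitoneOn q (Iic x₀) := by
        refine antitoneOn_of_deriv_nonpos (convex_Iic x₀)
          (fun x _ => (hq x).differentiableAt.continuousAt.continuousWithinAt)
          (fun x _ => (hq x).differentiableAt.differentiableWithinAt) ?_
        intro x hx
        rw [interior_Iic] at hx
        rw [hdq]
        exact le_trans (hq1mono (le_of_lt hx)) h.le
      exact fun x hx => hm hx self_mem_Iic hx
  obtain ⟨r, hrm, hrv, hrq⟩ := key
  have hc : Integrable (fun _ : ℝ => q x₀) (volume.restrict r) := by
    refine (hint.restrict (s := r)).mono' aestronglyMeasurable_const ?_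
    refine (ae_restrict_iff' hrm).2 (ae_of_all _ fun x hx => ?_)
    rw [Real.norm_eq_abs, abs_of_nonneg (h0 x₀)]
    exact hrq x hx
  rcases integrable_const_iff.1 hc with h | h
  · exact h
  · replace h := h.measure_univ_lt_top; rw [Measure.restrict_apply_univ, hrv] at h
    exact absurd h (by simp)

lemma aux_sq_integral_zero (f : ℝ → ℝ)
    (hf : ContinuousOn f (Icc (-1 : ℝ) 0))
    (hzero : (∫ t in (-1 : ℝ)..0, (f t) ^ 2) = 0) :
    ∀ z ∈ Ioo (-1 : ℝ) 0, f z = 0 := by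
  intro z hz0
  by_contra hne
  have hm : 0 < f z ^ 2 := by positivity
  have hca : ContinuousAt (fun t => f t ^ 2) z :=
    (((hf z (Ioo_subset_Icc_self hz0)).pow 2)).continuousAt
      (Icc_mem_nhds hz0.1 hz0.2)
  have hev : {t : ℝ | f z ^ 2 / 2 < f t ^ 2} ∈ 𝓝 z := by
    have := hca (Ioi_mem_nhds (show f z ^ 2 / 2 < f z ^ 2 by linarith))
    simpa [Set.preimage, Set.mem_Ioi] using this
  obtain ⟨ε, hε, hball⟩ := Metric.mem_nhds_iff.1
    (Filter.inter_mem hev (Ioo_mem_nhds hz0.1 hz0.2))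
  have hIccsub : Icc (z - ε/2) (z + ε/2) ⊆ ball z ε := by
    intro t ht
    rw [Real.ball_eq_Ioo]
    constructor <;> [linarith [ht.1]; linarith [ht.2]]
  have hsub2 : Icc (z - ε/2) (z + ε/2) ⊆ Ioo (-1:ℝ) 0 :=
    fun t ht => (hball (hIccsub ht)).2
  have hfi : ∀ u ∈ Icc (-1:ℝ) 0, ∀ v ∈ Icc (-1:ℝ) 0,
      IntervalIntegrable (fun t => f t ^ 2) volume u v := fun u hu v hv =>
    (((hf.pow 2)).mono (uIcc_subset_Icc hu hv)).intervalIntegrable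
  have ha' : z - ε/2 ∈ Icc (-1:ℝ) 0 :=
    Ioo_subset_Icc_self (hsub2 ⟨le_rfl, by linarith⟩)
  have hb' : z + ε/2 ∈ Icc (-1:ℝ) 0 :=
    Ioo_subset_Icc_self (hsub2 ⟨by linarith, le_rfl⟩)
  have hm1 : (-1:ℝ) ∈ Icc (-1:ℝ) 0 := ⟨le_rfl, by norm_num⟩
  have hm0 : (0:ℝ) ∈ Icc (-1:ℝ) 0 := ⟨by norm_num, le_rfl⟩
  have h1 : (∫ t in (-1:ℝ)..(z - ε/2), f t ^ 2) + (∫ t in (z - ε/2)..(z + ε/2), f t ^ 2)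
      = ∫ t in (-1:ℝ)..(z + ε/2), f t ^ 2 :=
    integral_add_adjacent_intervals (hfi _ hm1 _ ha') (hfi _ ha' _ hb')
  have h2 : (∫ t in (-1:ℝ)..(z + ε/2), f t ^ 2) + (∫ t in (z + ε/2)..(0:ℝ), f t ^ 2)
      = ∫ t in (-1:ℝ)..0, f t ^ 2 :=
    integral_add_adjacent_intervals (hfi _ hm1 _ hb') (hfi _ hb' _ hm0)
  have hnn1 : 0 ≤ ∫ t in (-1:ℝ)..(z - ε/2), f t ^ 2 :=
    integral_nonneg ha'.1 (fun t _ => sq_nonneg _)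
  have hnn2 : 0 ≤ ∫ t in (z + ε/2)..(0:ℝ), f t ^ 2 :=
    integral_nonneg hb'.2 (fun t _ => sq_nonneg _)
  have hmid : f z ^ 2 / 2 * ε ≤ ∫ t in (z - ε/2)..(z + ε/2), f t ^ 2 := by
    have hconst : (∫ _t in (z - ε/2)..(z + ε/2), f z ^ 2 / 2) = f z ^ 2 / 2 * ε := by
      rw [intervalIntegral.integral_const]
      simp only [smul_eq_mul]
      ring
    rw [← hconst]
    refine intervalIntegral.integral_mono_on (by linarith) intervalIntegrable_const
      (hfi _ ha' _ hb') (fun t ht => ?_)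
    exact (hball (hIccsub ht)).1.le
  nlinarith [hm, hε]



/-- Uniqueness for the div-curl problem on the flat strip in horizontal
dimension `d = 1` (rigid lid model). -/
theorem div_curl_uniqueness_dim1
    (μ : ℝ) (hμ : 0 < μ)
    (V w : ℝ × ℝ → ℝ)
    (S Scl : Set (ℝ × ℝ))
    (hS : S = {p | p.2 ∈ Ioo (-1 : ℝ) 0})
    (hScl : Scl = {p | p.2 ∈ Icc (-1 : ℝ) 0})
    (hV : ContDiffOn ℝ 1 V Scl)
    (hw : ContDiffOn ℝ 1 w Scl)
    (hL2 : IntegrableOn (fun p => (V p) ^ 2 + (w p) ^ 2) S)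
    (hdiv : ∀ p ∈ S,
      Real.sqrt μ * fderivWithin ℝ V Scl p (1, 0)
        + fderivWithin ℝ w Scl p (0, 1) = 0)
    (hcurl : ∀ p ∈ S,
      fderivWithin ℝ V Scl p (0, 1)
        - Real.sqrt μ * fderivWithin ℝ w Scl p (1, 0) = 0)
    (hbot : ∀ x : ℝ, w (x, -1) = 0)
    (htop : ∀ x : ℝ, w (x, 0) = 0) :
    ∀ p ∈ S, V p = 0 ∧ w p = 0 := by
  -- basic set facts
  have hSsub : S ⊆ Scl := by
    rw [hS, hScl]; exact fun p hp => Ioo_subset_Icc_self hp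
  have hSopen : IsOpen S := by
    rw [hS]; exact isOpen_Ioo.preimage continuous_snd
  have hmemS : ∀ x z : ℝ, ((x, z) : ℝ × ℝ) ∈ S ↔ z ∈ Ioo (-1:ℝ) 0 := by
    intro x z; rw [hS]; exact Iff.rfl
  have hmemScl : ∀ x z : ℝ, ((x, z) : ℝ × ℝ) ∈ Scl ↔ z ∈ Icc (-1:ℝ) 0 := by
    intro x z; rw [hScl]; exact Iff.rfl
  have hnhds : ∀ p ∈ S, Scl ∈ 𝓝 p := fun p hp =>
    Filter.mem_of_superset (hSopen.mem_nhds hp) hSsub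
  have hSclprod : Scl = (univ : Set ℝ) ×ˢ Icc (-1:ℝ) 0 := by
    rw [hScl]; ext p; simp
  have hud : UniqueDiffOn ℝ Scl := by
    apply uniqueDiffOn_convex
    · rw [hSclprod]; exact convex_univ.prod (convex_Icc _ _)
    · refine ⟨((0:ℝ), (-1/2 : ℝ)), ?_⟩
      have h0 : ((0:ℝ), (-1/2:ℝ)) ∈ S :=
        (hmemS 0 (-1/2)).2 ⟨by norm_num, by norm_num⟩
      exact interior_maximal hSsub hSopen h0
  -- partial derivatives (within the closed strip)
  set Vx : ℝ × ℝ → ℝ := fun p => fderivWithin ℝ V Scl p (1, 0) with hVxdef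
  set Vz : ℝ × ℝ → ℝ := fun p => fderivWithin ℝ V Scl p (0, 1) with hVzdef
  set Wx : ℝ × ℝ → ℝ := fun p => fderivWithin ℝ w Scl p (1, 0) with hWxdef
  set Wz : ℝ × ℝ → ℝ := fun p => fderivWithin ℝ w Scl p (0, 1) with hWzdef
  have hVxc : ContinuousOn Vx Scl :=
    (hV.continuousOn_fderivWithin hud le_rfl).clm_apply continuousOn_const
  have hVzc : ContinuousOn Vz Scl :=
    (hV.continuousOn_fderivWithin hud le_rfl).clm_apply continuousOn_const
  have hWxc : ContinuousOn Wx Scl :=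
    (hw.continuousOn_fderivWithin hud le_rfl).clm_apply continuousOn_const
  have hWzc : ContinuousOn Wz Scl :=
    (hw.continuousOn_fderivWithin hud le_rfl).clm_apply continuousOn_const
  have hVder : ∀ p ∈ S, HasFDerivAt V (fderivWithin ℝ V Scl p) p := fun p hp =>
    ((hV.differentiableOn one_ne_zero) p (hSsub hp)).hasFDerivWithinAt.hasFDerivAt (hnhds p hp)
  have hWder : ∀ p ∈ S, HasFDerivAt w (fderivWithin ℝ w Scl p) p := fun p hp =>
    ((hw.differentiableOn one_ne_zero) p (hSsub hp)).hasFDerivWithinAt.hasFDerivAt (hnhds p hp)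
  -- slice derivative facts
  have hVxs : ∀ z ∈ Ioo (-1:ℝ) 0, ∀ x : ℝ,
      HasDerivAt (fun x => V (x, z)) (Vx (x, z)) x := by
    intro z hz x
    have hp : ((x, z) : ℝ × ℝ) ∈ S := (hmemS x z).2 hz
    have hline : HasDerivAt (fun x : ℝ => ((x, z) : ℝ × ℝ)) ((1 : ℝ), (0 : ℝ)) x :=
      (hasDerivAt_id x).prodMk (hasDerivAt_const x z)
    exact (hVder _ hp).comp_hasDerivAt x hline
  have hVzs : ∀ z ∈ Ioo (-1:ℝ) 0, ∀ x : ℝ,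
      HasDerivAt (fun z => V (x, z)) (Vz (x, z)) z := by
    intro z hz x
    have hp : ((x, z) : ℝ × ℝ) ∈ S := (hmemS x z).2 hz
    have hline : HasDerivAt (fun z : ℝ => ((x, z) : ℝ × ℝ)) ((0 : ℝ), (1 : ℝ)) z :=
      (hasDerivAt_const z x).prodMk (hasDerivAt_id z)
    exact (hVder _ hp).comp_hasDerivAt z hline
  have hWxs : ∀ z ∈ Ioo (-1:ℝ) 0, ∀ x : ℝ,
      HasDerivAt (fun x => w (x, z)) (Wx (x, z)) x := by
    intro z hz x
    have hp : ((x, z) : ℝ × ℝ) ∈ S := (hmemS x z).2 hz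
    have hline : HasDerivAt (fun x : ℝ => ((x, z) : ℝ × ℝ)) ((1 : ℝ), (0 : ℝ)) x :=
      (hasDerivAt_id x).prodMk (hasDerivAt_const x z)
    exact (hWder _ hp).comp_hasDerivAt x hline
  have hWzs : ∀ z ∈ Ioo (-1:ℝ) 0, ∀ x : ℝ,
      HasDerivAt (fun z => w (x, z)) (Wz (x, z)) z := by
    intro z hz x
    have hp : ((x, z) : ℝ × ℝ) ∈ S := (hmemS x z).2 hz
    have hline : HasDerivAt (fun z : ℝ => ((x, z) : ℝ × ℝ)) ((0 : ℝ), (1 : ℝ)) z :=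
      (hasDerivAt_const z x).prodMk (hasDerivAt_id z)
    exact (hWder _ hp).comp_hasDerivAt z hline
  -- slice continuity and integrability helpers
  have hsliceC : ∀ f : ℝ × ℝ → ℝ, ContinuousOn f Scl → ∀ x : ℝ,
      ContinuousOn (fun z => f (x, z)) (Icc (-1:ℝ) 0) := by
    intro f hf x
    exact hf.comp (continuous_const.prodMk continuous_id).continuousOn
      (fun z hz => (hmemScl x z).2 hz)
  have hii : ∀ f : ℝ → ℝ, ContinuousOn f (Icc (-1:ℝ) 0) →
      ∀ u ∈ Icc (-1:ℝ) 0, ∀ v ∈ Icc (-1:ℝ) 0, IntervalIntegrable f volume u v :=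
    fun f hf u hu v hv => (hf.mono (uIcc_subset_Icc hu hv)).intervalIntegrable
  have hm1 : (-1:ℝ) ∈ Icc (-1:ℝ) 0 := ⟨le_rfl, by norm_num⟩
  have hm0 : (0:ℝ) ∈ Icc (-1:ℝ) 0 := ⟨by norm_num, le_rfl⟩
  -- uniform bounds near a point
  have hbound : ∀ f : ℝ × ℝ → ℝ, ContinuousOn f Scl → ∀ x₀ : ℝ,
      ∃ C : ℝ, 0 ≤ C ∧ ∀ x ∈ ball x₀ 1, ∀ z ∈ Icc (-1:ℝ) 0, |f (x, z)| ≤ C := by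
    intro f hf x₀
    have hKsub : (Icc (x₀-1) (x₀+1) ×ˢ Icc (-1:ℝ) 0) ⊆ Scl := by
      rw [hScl]; exact fun p hp => hp.2
    obtain ⟨C, hC⟩ :=
      ((isCompact_Icc.prod isCompact_Icc) :
        IsCompact (Icc (x₀-1) (x₀+1) ×ˢ Icc (-1:ℝ) 0)).exists_bound_of_continuousOn
        (hf.mono hKsub)
    refine ⟨max C 0, le_max_right _ _, fun x hx z hz => ?_⟩
    have hxm : x ∈ Icc (x₀-1) (x₀+1) := by
      have := mem_ball_iff_norm.1 hx
      rw [Real.norm_eq_abs, abs_lt] at this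
      constructor <;> linarith [this.1, this.2]
    have := hC (x, z) ⟨hxm, hz⟩
    rw [Real.norm_eq_abs] at this
    exact le_trans this (le_max_left _ _)
  -- the stream function
  set sμ : ℝ := Real.sqrt μ with hsμdef
  have hsμpos : 0 < sμ := Real.sqrt_pos.2 hμ
  have hsμsq : sμ * sμ = μ := Real.mul_self_sqrt hμ.le
  set ψ : ℝ → ℝ → ℝ := fun x z => sμ * ∫ t in (-1:ℝ)..z, V (x, t) with hψdef
  have hψcont : ∀ x : ℝ, ContinuousOn (ψ x) (Icc (-1:ℝ) 0) := by
    intro x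
    have huIcc : uIcc (-1:ℝ) 0 = Icc (-1:ℝ) 0 := uIcc_of_le (by norm_num)
    have hint : IntegrableOn (fun t => V (x, t)) (uIcc (-1:ℝ) 0) volume := by
      rw [huIcc]
      exact (hsliceC V hV.continuousOn x).integrableOn_compact isCompact_Icc
    have := continuousOn_primitive_interval (a := (-1:ℝ)) (b := 0) hint
    rw [huIcc] at this
    exact continuousOn_const.mul this
  have hψz : ∀ (x : ℝ), ∀ z ∈ Ioo (-1:ℝ) 0, HasDerivAt (ψ x) (sμ * V (x, z)) z := by
    intro x z hz
    have hint : IntervalIntegrable (fun t => V (x, t)) volume (-1) z :=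
      hii _ (hsliceC V hV.continuousOn x) _ hm1 _ (Ioo_subset_Icc_self hz)
    have hmeas : StronglyMeasurableAtFilter (fun t => V (x, t)) (𝓝 z) volume :=
      ((hsliceC V hV.continuousOn x).mono Ioo_subset_Icc_self).stronglyMeasurableAtFilter
        isOpen_Ioo z hz
    have hcontat : ContinuousAt (fun t => V (x, t)) z :=
      ((hsliceC V hV.continuousOn x) z (Ioo_subset_Icc_self hz)).continuousAt
        (Icc_mem_nhds hz.1 hz.2)
    exact (intervalIntegral.integral_hasDerivAt_right hint hmeas hcontat).const_mul sμ
  -- x-derivative of the stream function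
  have hψx : ∀ z ∈ Icc (-1:ℝ) 0, ∀ x₀ : ℝ,
      HasDerivAt (fun x => ψ x z) (-(w (x₀, z))) x₀ := by
    intro z hz x₀
    rcases eq_or_lt_of_le hz.1 with heq | hlt
    · have hfun : (fun x => ψ x z) = fun _ => (0:ℝ) := by
        funext x; rw [hψdef]; simp [← heq]
      have h0 : -(w (x₀, z)) = 0 := by rw [← heq, hbot]; ring
      rw [hfun, h0]; exact hasDerivAt_const x₀ 0
    · obtain ⟨Cx, hCx0, hCx⟩ := hbound Vx hVxc x₀
      have huIoc : uIoc (-1:ℝ) z = Ioc (-1:ℝ) z := uIoc_of_le hz.1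
      have hsub1 : uIoc (-1:ℝ) z ⊆ Icc (-1:ℝ) 0 := by
        rw [huIoc]; exact fun t ht => ⟨ht.1.le, ht.2.trans hz.2⟩
      have haez : ∀ᵐ t : ℝ, t ∈ uIoc (-1:ℝ) z → t ∈ Ioo (-1:ℝ) 0 := by
        have h1 : ∀ᵐ t : ℝ, t ≠ z := by
          refine (MeasureTheory.ae_iff).2 ?_
          have : {t : ℝ | ¬ t ≠ z} = {z} := by ext t; simp
          rw [this, Real.volume_singleton]
        filter_upwards [h1] with t ht hmem
        rw [huIoc] at hmem
        exact ⟨hmem.1, lt_of_lt_of_le (lt_of_le_of_ne hmem.2 ht) hz.2⟩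
      have key := (intervalIntegral.hasDerivAt_integral_of_dominated_loc_of_deriv_le
        (F := fun x t => V (x, t)) (F' := fun x t => Vx (x, t)) (x₀ := x₀)
        (a := -1) (b := z) (bound := fun _ => Cx) (μ := volume) (ball_mem_nhds x₀ one_pos)
        (Filter.Eventually.of_forall fun x =>
          (((hsliceC V hV.continuousOn x).mono hsub1).aestronglyMeasurable measurableSet_uIoc))
        (hii _ (hsliceC V hV.continuousOn x₀) _ hm1 _ (Icc_subset_Icc le_rfl hz.2 ⟨hlt.le, le_rfl⟩))
        (((hsliceC Vx hVxc x₀).mono hsub1).aestronglyMeasurable measurableSet_uIoc)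
        (ae_of_all _ fun t ht x hx => by
          rw [Real.norm_eq_abs]; exact hCx x hx t (hsub1 ht))
        intervalIntegrable_const
        (by filter_upwards [haez] with t ht hmem x _; exact hVxs t (ht hmem) x)).2
      have hWzint : ∫ t in (-1:ℝ)..z, Wz (x₀, t) = w (x₀, z) - w (x₀, -1) := by
        refine intervalIntegral.integral_eq_sub_of_hasDeriv_right_of_le hz.1
          ((hsliceC w hw.continuousOn x₀).mono (Icc_subset_Icc le_rfl hz.2)) ?_ ?_
        · intro t ht
          exact (hWzs t ⟨ht.1, lt_of_lt_of_le ht.2 hz.2⟩ x₀).hasDerivWithinAt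
        · exact hii _ (hsliceC Wz hWzc x₀) _ hm1 _ (Icc_subset_Icc le_rfl hz.2 ⟨hlt.le, le_rfl⟩)
      have hVxint : ∫ t in (-1:ℝ)..z, Vx (x₀, t) = -(1/sμ) * w (x₀, z) := by
        have hcong : ∫ t in (-1:ℝ)..z, Vx (x₀, t)
            = ∫ t in (-1:ℝ)..z, (-(1/sμ)) * Wz (x₀, t) := by
          refine intervalIntegral.integral_congr_ae ?_
          filter_upwards [haez] with t ht hmem
          have hpde := hdiv (x₀, t) ((hmemS x₀ t).2 (ht hmem))
          have hs : sμ ≠ 0 := ne_of_gt hsμpos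
          field_simp
          linarith
        rw [hcong, intervalIntegral.integral_const_mul, hWzint, hbot]
        ring
      rw [hVxint] at key
      have hval : sμ * (-(1/sμ) * w (x₀, z)) = -(w (x₀, z)) := by
        field_simp
      have := key.const_mul sμ
      rw [hval] at this
      exact this
  -- boundary values of the stream function
  have hψbot : ∀ x : ℝ, ψ x (-1) = 0 := by
    intro x; rw [hψdef]; simp
  have hψconst : ∀ x y : ℝ, ψ x 0 = ψ y 0 := by
    apply is_const_of_deriv_eq_zero (𝕜 := ℝ) (f := fun x => ψ x 0)
    · intro x; exact (hψx 0 hm0 x).differentiableAt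
    · intro x
      rw [(hψx 0 hm0 x).deriv, htop]
      ring
  -- slice integrals
  set b : ℝ → ℝ := fun x => ∫ z in (-1:ℝ)..0, (V (x, z))^2 with hbdef
  set a : ℝ → ℝ := fun x => ∫ z in (-1:ℝ)..0, (w (x, z))^2 with hadef
  have hb0 : ∀ x, 0 ≤ b x := fun x =>
    intervalIntegral.integral_nonneg (by norm_num) (fun t _ => sq_nonneg _)
  have ha0 : ∀ x, 0 ≤ a x := fun x =>
    intervalIntegral.integral_nonneg (by norm_num) (fun t _ => sq_nonneg _)
  -- Fubini: the function g is integrable on ℝ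
  have hSprod : S = (univ : Set ℝ) ×ˢ Ioo (-1:ℝ) 0 := by
    rw [hS]; ext p; simp
  set g : ℝ → ℝ := fun x => ∫ z in Ioo (-1:ℝ) 0, ((V (x, z))^2 + (w (x, z))^2) with hgdef
  have hrestrict : (volume : Measure (ℝ×ℝ)).restrict S
      = (volume : Measure ℝ).prod ((volume : Measure ℝ).restrict (Ioo (-1:ℝ) 0)) := by
    rw [hSprod, MeasureTheory.Measure.volume_eq_prod, ← Measure.prod_restrict,
      Measure.restrict_univ]
  have hgint : Integrable g volume := by
    have h2 : Integrable (fun p : ℝ×ℝ => V p ^ 2 + w p ^ 2)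
        ((volume : Measure ℝ).prod ((volume : Measure ℝ).restrict (Ioo (-1:ℝ) 0))) := by
      rw [← hrestrict]; exact hL2
    exact h2.integral_prod_left
  -- slice integrability over Ioo
  have hIooint : ∀ f : ℝ → ℝ, ContinuousOn f (Icc (-1:ℝ) 0) →
      IntegrableOn f (Ioo (-1:ℝ) 0) volume := fun f hf =>
    (hf.integrableOn_compact isCompact_Icc).mono_set Ioo_subset_Icc_self
  have hbg : ∀ x, b x ≤ g x := by
    intro x
    have h1 : b x = ∫ z in Ioo (-1:ℝ) 0, (V (x, z))^2 := by
      show (∫ z in (-1:ℝ)..0, (V (x, z))^2) = ∫ z in Ioo (-1:ℝ) 0, (V (x, z))^2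
      rw [intervalIntegral.integral_of_le (by norm_num : (-1:ℝ) ≤ 0),
        MeasureTheory.integral_Ioc_eq_integral_Ioo]
    rw [h1]
    refine setIntegral_mono_on
      (hIooint _ ((hsliceC V hV.continuousOn x).pow 2))
      (hIooint _ (((hsliceC V hV.continuousOn x).pow 2).add
        ((hsliceC w hw.continuousOn x).pow 2)))
      measurableSet_Ioo (fun z hz => le_add_of_nonneg_right (sq_nonneg _))
  -- Cauchy-Schwarz on the unit-length slice
  have hCS : ∀ x : ℝ, (∫ t in (-1:ℝ)..0, |V (x, t)|)^2 ≤ b x := by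
    intro x
    set c : ℝ := ∫ t in (-1:ℝ)..0, |V (x, t)| with hcdef
    have habs : ContinuousOn (fun t => |V (x, t)|) (Icc (-1:ℝ) 0) :=
      (hsliceC V hV.continuousOn x).abs
    have hsq : ContinuousOn (fun t => (V (x, t))^2) (Icc (-1:ℝ) 0) :=
      (hsliceC V hV.continuousOn x).pow 2
    have hnn : 0 ≤ ∫ t in (-1:ℝ)..0, (|V (x, t)| - c)^2 :=
      intervalIntegral.integral_nonneg (by norm_num) (fun t _ => sq_nonneg _)
    have hexp : EqOn (fun t => (|V (x, t)| - c)^2)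
        (fun t => (V (x, t))^2 - (2*c) * |V (x, t)| + c^2) (uIcc (-1:ℝ) 0) := by
      intro t _
      simp only []
      rw [sub_sq, sq_abs]
      ring
    rw [intervalIntegral.integral_congr hexp] at hnn
    rw [intervalIntegral.integral_add
        (((hii _ hsq _ hm1 _ hm0)).sub ((hii _ habs _ hm1 _ hm0).const_mul (2*c)))
        intervalIntegrable_const,
      intervalIntegral.integral_sub (hii _ hsq _ hm1 _ hm0)
        ((hii _ habs _ hm1 _ hm0).const_mul (2*c)),
      intervalIntegral.integral_const_mul, intervalIntegral.integral_const] at hnn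
    have hbx : (∫ t in (-1:ℝ)..0, (V (x, t))^2) = b x := rfl
    rw [hbx, ← hcdef] at hnn
    simp only [smul_eq_mul] at hnn
    nlinarith [hnn]
  -- pointwise bound for ψ²
  have hψsq : ∀ x : ℝ, ∀ z ∈ Icc (-1:ℝ) 0, (ψ x z)^2 ≤ μ * b x := by
    intro x z hz
    have h1 : |∫ t in (-1:ℝ)..z, V (x, t)| ≤ ∫ t in (-1:ℝ)..z, |V (x, t)| :=
      intervalIntegral.abs_integral_le_integral_abs hz.1
    have habs : ContinuousOn (fun t => |V (x, t)|) (Icc (-1:ℝ) 0) :=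
      (hsliceC V hV.continuousOn x).abs
    have h2 : (∫ t in (-1:ℝ)..z, |V (x, t)|) ≤ ∫ t in (-1:ℝ)..0, |V (x, t)| := by
      have hadd : (∫ t in (-1:ℝ)..z, |V (x, t)|) + (∫ t in z..(0:ℝ), |V (x, t)|)
          = ∫ t in (-1:ℝ)..0, |V (x, t)| :=
        integral_add_adjacent_intervals (hii _ habs _ hm1 _ hz) (hii _ habs _ hz _ hm0)
      have hpos : 0 ≤ ∫ t in z..(0:ℝ), |V (x, t)| :=
        intervalIntegral.integral_nonneg hz.2 (fun t _ => abs_nonneg _)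
      linarith
    have h3 : (∫ t in (-1:ℝ)..z, V (x, t))^2 ≤ b x := by
      have h4 : (∫ t in (-1:ℝ)..z, V (x, t))^2 = |∫ t in (-1:ℝ)..z, V (x, t)|^2 :=
        (sq_abs _).symm
      rw [h4]
      calc |∫ t in (-1:ℝ)..z, V (x, t)|^2
          ≤ (∫ t in (-1:ℝ)..0, |V (x, t)|)^2 := by
            have h5 : (0:ℝ) ≤ |∫ t in (-1:ℝ)..z, V (x, t)| := abs_nonneg _
            have h6 := le_trans h1 h2
            nlinarith
        _ ≤ b x := hCS x
    have h7 : (ψ x z)^2 = μ * (∫ t in (-1:ℝ)..z, V (x, t))^2 := by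
      rw [hψdef]
      simp only []
      rw [mul_pow, sq, hsμsq]
    rw [h7]
    exact mul_le_mul_of_nonneg_left h3 hμ.le
  -- the top boundary value of ψ vanishes
  have hψtop : ∀ x : ℝ, ψ x 0 = 0 := by
    intro x
    set c₀ : ℝ := ψ 0 0 with hc₀def
    have hcx : ∀ y : ℝ, ψ y 0 = c₀ := fun y => hψconst y 0
    have hcsq : Integrable (fun _ : ℝ => c₀^2) volume := by
      refine (hgint.const_mul μ).mono' aestronglyMeasurable_const (ae_of_all _ fun y => ?_)
      rw [Real.norm_eq_abs, abs_of_nonneg (sq_nonneg _), ← hcx y]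
      calc (ψ y 0)^2 ≤ μ * b y := hψsq y 0 hm0
        _ ≤ μ * g y := mul_le_mul_of_nonneg_left (hbg y) hμ.le
    have h00 : c₀^2 = 0 := by
      rcases integrable_const_iff.1 hcsq with h | h
      · exact h
      · exfalso
        replace h := h.measure_univ_lt_top; rw [Real.volume_univ] at h
        exact absurd h (by simp)
    rw [hcx x]
    exact pow_eq_zero_iff (by norm_num) |>.1 h00
  -- uniform bound for ψ
  have hψbd : ∀ x₀ Cv : ℝ, 0 ≤ Cv → (∀ x ∈ ball x₀ 1, ∀ t ∈ Icc (-1:ℝ) 0, |V (x, t)| ≤ Cv) →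
      ∀ x ∈ ball x₀ 1, ∀ z ∈ Icc (-1:ℝ) 0, |ψ x z| ≤ sμ * Cv := by
    intro x₀ Cv hCv0 hCv x hx z hz
    have h1 : ‖∫ t in (-1:ℝ)..z, V (x, t)‖ ≤ Cv * |z - (-1)| := by
      refine intervalIntegral.norm_integral_le_of_norm_le_const (fun t ht => ?_)
      rw [Real.norm_eq_abs]
      rw [uIoc_of_le hz.1] at ht
      exact hCv x hx t ⟨ht.1.le, ht.2.trans hz.2⟩
    rw [Real.norm_eq_abs] at h1
    have h2 : |z - (-1)| ≤ 1 := by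
      rw [abs_of_nonneg (by linarith [hz.1])]
      linarith [hz.2]
    have h3 : |ψ x z| = sμ * |∫ t in (-1:ℝ)..z, V (x, t)| := by
      rw [hψdef]
      simp only []
      rw [abs_mul, abs_of_nonneg hsμpos.le]
    rw [h3]
    have h4 : |∫ t in (-1:ℝ)..z, V (x, t)| ≤ Cv := by nlinarith [abs_nonneg (∫ t in (-1:ℝ)..z, V (x, t))]
    exact mul_le_mul_of_nonneg_left h4 hsμpos.le
  -- the energy functional and its derivatives
  set q : ℝ → ℝ := fun x => ∫ z in (-1:ℝ)..0, (ψ x z)^2 with hqdef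
  set q1 : ℝ → ℝ := fun x => ∫ z in (-1:ℝ)..0, (-2 * ψ x z * w (x, z)) with hq1def
  set q2 : ℝ → ℝ := fun x =>
    ∫ z in (-1:ℝ)..0, (-2 * (-(w (x, z)) * w (x, z) + ψ x z * Wx (x, z))) with hq2def
  have hΙ0 : uIoc (-1:ℝ) 0 ⊆ Icc (-1:ℝ) 0 := by
    rw [uIoc_of_le (by norm_num : (-1:ℝ) ≤ 0)]
    exact Ioc_subset_Icc_self
  have haez0 : ∀ᵐ t : ℝ, t ∈ uIoc (-1:ℝ) 0 → t ∈ Ioo (-1:ℝ) 0 := by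
    have h1 : ∀ᵐ t : ℝ, t ≠ 0 := by
      refine (MeasureTheory.ae_iff).2 ?_
      have : {t : ℝ | ¬ t ≠ 0} = {0} := by ext t; simp
      rw [this, Real.volume_singleton]
    filter_upwards [h1] with t ht hmem
    rw [uIoc_of_le (by norm_num : (-1:ℝ) ≤ 0)] at hmem
    exact ⟨hmem.1, lt_of_le_of_ne hmem.2 ht⟩
  have hqd : ∀ x₀ : ℝ, HasDerivAt q (q1 x₀) x₀ := by
    intro x₀
    obtain ⟨Cv, hCv0, hCv⟩ := hbound V hV.continuousOn x₀
    obtain ⟨Cw, hCw0, hCw⟩ := hbound w hw.continuousOn x₀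
    refine (intervalIntegral.hasDerivAt_integral_of_dominated_loc_of_deriv_le
      (F := fun x z => (ψ x z)^2) (F' := fun x z => -2 * ψ x z * w (x, z)) (x₀ := x₀)
      (a := -1) (b := 0) (bound := fun _ => 2 * (sμ * Cv) * Cw) (μ := volume) (ball_mem_nhds x₀ one_pos)
      (Filter.Eventually.of_forall fun x =>
        (((hψcont x).pow 2).mono hΙ0).aestronglyMeasurable measurableSet_uIoc)
      (hii _ ((hψcont x₀).pow 2) _ hm1 _ hm0)
      ((((continuousOn_const.mul (hψcont x₀)).mul (hsliceC w hw.continuousOn x₀)).mono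
        hΙ0).aestronglyMeasurable measurableSet_uIoc)
      (ae_of_all _ fun t ht x hx => ?_)
      intervalIntegrable_const
      (ae_of_all _ fun t ht x hx => ?_)).2
    · rw [Real.norm_eq_abs]
      have h1 := hψbd x₀ Cv hCv0 hCv x hx t (hΙ0 ht)
      have h2 := hCw x hx t (hΙ0 ht)
      have h3 : |(-2 : ℝ)| = 2 := by norm_num
      calc |(-2) * ψ x t * w (x, t)| = 2 * |ψ x t| * |w (x, t)| := by
            rw [abs_mul, abs_mul, h3]
        _ ≤ 2 * (sμ * Cv) * Cw := by
            have := abs_nonneg (ψ x t)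
            have := abs_nonneg (w (x, t))
            nlinarith
    · have h := (hψx t (hΙ0 ht) x).fun_pow 2
      refine h.congr_deriv ?_
      rw [show (2:ℕ) - 1 = 1 from rfl, pow_one, Nat.cast_ofNat]
      ring
  have hq1d : ∀ x₀ : ℝ, HasDerivAt q1 (q2 x₀) x₀ := by
    intro x₀
    obtain ⟨Cv, hCv0, hCv⟩ := hbound V hV.continuousOn x₀
    obtain ⟨Cw, hCw0, hCw⟩ := hbound w hw.continuousOn x₀
    obtain ⟨Cg, hCg0, hCg⟩ := hbound Wx hWxc x₀
    refine (intervalIntegral.hasDerivAt_integral_of_dominated_loc_of_deriv_le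
      (F := fun x z => -2 * ψ x z * w (x, z))
      (F' := fun x z => -2 * (-(w (x, z)) * w (x, z) + ψ x z * Wx (x, z))) (x₀ := x₀)
      (a := -1) (b := 0) (bound := fun _ => 2 * (Cw * Cw + (sμ * Cv) * Cg)) (μ := volume)
      (ball_mem_nhds x₀ one_pos)
      (Filter.Eventually.of_forall fun x =>
        ((((continuousOn_const.mul (hψcont x)).mul (hsliceC w hw.continuousOn x)).mono
          hΙ0).aestronglyMeasurable measurableSet_uIoc))
      (hii _ ((continuousOn_const.mul (hψcont x₀)).mul (hsliceC w hw.continuousOn x₀)) _ hm1 _ hm0)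
      (((continuousOn_const.mul
        ((((hsliceC w hw.continuousOn x₀).neg).mul (hsliceC w hw.continuousOn x₀)).add
          ((hψcont x₀).mul (hsliceC Wx hWxc x₀)))).mono
        hΙ0).aestronglyMeasurable measurableSet_uIoc)
      (ae_of_all _ fun t ht x hx => ?_)
      intervalIntegrable_const
      ?_).2
    · show _ ≤ 2 * (Cw * Cw + (sμ * Cv) * Cg)
      rw [Real.norm_eq_abs, abs_mul, (show |(-2:ℝ)| = 2 by norm_num)]
      have hA : |(-(w (x, t))) * w (x, t)| ≤ Cw * Cw := by
        rw [abs_mul, abs_neg]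
        exact mul_le_mul (hCw x hx t (hΙ0 ht)) (hCw x hx t (hΙ0 ht)) (abs_nonneg _) hCw0
      have hB : |ψ x t * Wx (x, t)| ≤ (sμ * Cv) * Cg := by
        rw [abs_mul]
        exact mul_le_mul (hψbd x₀ Cv hCv0 hCv x hx t (hΙ0 ht)) (hCg x hx t (hΙ0 ht))
          (abs_nonneg _) (by positivity)
      have habs := abs_add_le ((-(w (x, t))) * w (x, t)) (ψ x t * Wx (x, t))
      linarith
    · filter_upwards [haez0] with t ht hmem x hx
      have hmem' := ht hmem
      have h1 := hψx t (Ioo_subset_Icc_self hmem') x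
      have h2 := hWxs t hmem' x
      have h3 := (h1.fun_mul h2).const_mul (-2 : ℝ)
      have h4 : (fun x => (-2:ℝ) * (ψ x t * w (x, t))) = (fun x => -2 * ψ x t * w (x, t)) := by
        funext y; ring
      rw [h4] at h3
      exact h3
  -- integration by parts identity
  have hWxint : ∀ x : ℝ, (∫ z in (-1:ℝ)..0, ψ x z * Wx (x, z)) = -(b x) := by
    intro x
    have hftc : ∫ z in (-1:ℝ)..0, (sμ * (V (x, z))^2 + ψ x z * Vz (x, z))
        = ψ x 0 * V (x, 0) - ψ x (-1) * V (x, -1) := by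
      refine intervalIntegral.integral_eq_sub_of_hasDeriv_right_of_le (by norm_num)
        ((hψcont x).mul (hsliceC V hV.continuousOn x)) (fun z hz => ?_) ?_
      · have h := (hψz x z hz).mul (hVzs z hz x)
        have heq : sμ * V (x, z) * V (x, z) + ψ x z * Vz (x, z)
            = sμ * (V (x, z))^2 + ψ x z * Vz (x, z) := by ring
        exact (heq ▸ h).hasDerivWithinAt
      · exact hii _ ((continuousOn_const.mul ((hsliceC V hV.continuousOn x).pow 2)).add
          ((hψcont x).mul (hsliceC Vz hVzc x))) _ hm1 _ hm0
    rw [hψtop x, hψbot x] at hftc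
    simp only [zero_mul, sub_zero, sub_self] at hftc
    have hsplit : (∫ z in (-1:ℝ)..0, (sμ * (V (x, z))^2 + ψ x z * Vz (x, z)))
        = sμ * b x + ∫ z in (-1:ℝ)..0, ψ x z * Vz (x, z) := by
      rw [intervalIntegral.integral_add (f := fun z => sμ * (V (x, z))^2) (g := fun z => ψ x z * Vz (x, z))
        ((hii _ ((hsliceC V hV.continuousOn x).pow 2) _ hm1 _ hm0).const_mul sμ)
        (hii _ ((hψcont x).mul (hsliceC Vz hVzc x)) _ hm1 _ hm0),
        intervalIntegral.integral_const_mul]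
    have hVzint : (∫ z in (-1:ℝ)..0, ψ x z * Vz (x, z)) = -(sμ * b x) := by
      rw [hsplit] at hftc
      linarith
    have hcong : (∫ z in (-1:ℝ)..0, ψ x z * Wx (x, z))
        = ∫ z in (-1:ℝ)..0, (1/sμ) * (ψ x z * Vz (x, z)) := by
      refine intervalIntegral.integral_congr_ae ?_
      filter_upwards [haez0] with t ht hmem
      have hc := hcurl (x, t) ((hmemS x t).2 (ht hmem))
      have hc' : Vz (x, t) - sμ * Wx (x, t) = 0 := hc
      have hWxVz : Wx (x, t) = (1/sμ) * Vz (x, t) := by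
        field_simp
        linarith
      rw [hWxVz]
      ring
    rw [hcong, intervalIntegral.integral_const_mul, hVzint]
    field_simp
  have hq2val : ∀ x : ℝ, q2 x = 2 * a x + 2 * b x := by
    intro x
    have hcong : EqOn (fun z => -2 * (-(w (x, z)) * w (x, z) + ψ x z * Wx (x, z)))
        (fun z => 2 * (w (x, z))^2 + (-2) * (ψ x z * Wx (x, z))) (uIcc (-1:ℝ) 0) := by
      intro z _
      simp only []
      ring
    show (∫ z in (-1:ℝ)..0, -2 * (-(w (x, z)) * w (x, z) + ψ x z * Wx (x, z)))
        = 2 * a x + 2 * b x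
    rw [intervalIntegral.integral_congr hcong,
      intervalIntegral.integral_add (f := fun z => 2 * (w (x, z))^2) (g := fun z => (-2) * (ψ x z * Wx (x, z)))
        ((hii _ ((hsliceC w hw.continuousOn x).pow 2) _ hm1 _ hm0).const_mul 2)
        ((hii _ ((hψcont x).mul (hsliceC Wx hWxc x)) _ hm1 _ hm0).const_mul (-2)),
      intervalIntegral.integral_const_mul, intervalIntegral.integral_const_mul, hWxint x]
    have haa : (∫ z in (-1:ℝ)..0, (w (x, z))^2) = a x := rfl
    rw [haa]
    ring
  have hq2nn : ∀ x : ℝ, 0 ≤ q2 x := by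
    intro x
    rw [hq2val x]
    linarith [ha0 x, hb0 x]
  have hqnn : ∀ x : ℝ, 0 ≤ q x := fun x =>
    intervalIntegral.integral_nonneg (by norm_num) (fun t _ => sq_nonneg _)
  have hqle : ∀ x : ℝ, q x ≤ μ * g x := by
    intro x
    have h1 : q x ≤ μ * b x := by
      have h2 := intervalIntegral.integral_mono_on (a := (-1:ℝ)) (b := (0:ℝ))
        (by norm_num) (hii _ ((hψcont x).pow 2) _ hm1 _ hm0) intervalIntegrable_const
        (fun z hz => hψsq x z hz)
      rw [intervalIntegral.integral_const] at h2
      simpa using h2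
    exact le_trans h1 (mul_le_mul_of_nonneg_left (hbg x) hμ.le)
  have hqcont : Continuous q :=
    continuous_iff_continuousAt.2 fun x => (hqd x).differentiableAt.continuousAt
  have hqint : Integrable q volume := by
    refine (hgint.const_mul μ).mono' hqcont.aestronglyMeasurable (ae_of_all _ fun x => ?_)
    rw [Real.norm_eq_abs, abs_of_nonneg (hqnn x)]
    exact hqle x
  have hqzero := aux_ray_zero q q1 q2 hqd hq1d hq2nn hqnn hqint
  have hq1zero : ∀ x : ℝ, q1 x = 0 := by
    intro x
    have h := (hqd x).deriv
    have hqfun : q = fun _ => (0:ℝ) := funext hqzero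
    rw [hqfun] at h
    simp at h
    exact h.symm
  have hq2zero : ∀ x : ℝ, q2 x = 0 := by
    intro x
    have h := (hq1d x).deriv
    have hfun : q1 = fun _ => (0:ℝ) := funext hq1zero
    rw [hfun] at h
    simp at h
    exact h.symm
  intro p hp
  obtain ⟨x, z⟩ := p
  have hz : z ∈ Ioo (-1:ℝ) 0 := (hmemS x z).1 hp
  have hval := hq2zero x
  rw [hq2val x] at hval
  have hax : a x = 0 := by linarith [ha0 x, hb0 x]
  have hbx : b x = 0 := by linarith [ha0 x, hb0 x]
  constructor
  · exact aux_sq_integral_zero (fun t => V (x, t)) (hsliceC V hV.continuousOn x) hbx z hz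
  · exact aux_sq_integral_zero (fun t => w (x, t)) (hsliceC w hw.continuousOn x) hax z hz
end

section
/- Let μ > 0 and 0 < γ ≤ 1. Let Φ : ℝ² × [−1, 0] → ℝ be twice continuously differentiable on the closed strip S = ℝ² × (−1, 0), satisfying the anisotropic Laplace equation μ ∂ₓ²Φ + γ²μ ∂_y²Φ + ∂_z²Φ = 0 on S, the Neumann boundary conditions ∂_zΦ(x, y, 0) = 0 and ∂_zΦ(x, y, −1) = 0 for all (x, y) ∈ ℝ², and such that the scaled gradient ∇^{μ,γ}Φ = (√μ ∂ₓΦ, γ√μ ∂_yΦ, ∂_zΦ) is square integrable on S. Then ∇^{μ,γ}Φ = 0 identically on S. -/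
open MeasureTheory Set

set_option maxHeartbeats 1000000

namespace NeumannAux

lemma integrableOn_strip (S Scl : Set (ℝ × ℝ × ℝ))
    (hS : S = {p : ℝ × ℝ × ℝ | p.2.2 ∈ Ioo (-1 : ℝ) 0})
    (hScl : Scl = {p : ℝ × ℝ × ℝ | p.2.2 ∈ Icc (-1 : ℝ) 0})
    (f : ℝ × ℝ × ℝ → ℝ) (ρ : ℝ)
    (hc : ContinuousOn f Scl)
    (hz : ∀ p ∈ S, ρ ≤ max |p.1| |p.2.1| → f p = 0) :
    IntegrableOn f S := by
  have hsub : S ⊆ Scl := by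
    rw [hS, hScl]; exact fun p hp => Ioo_subset_Icc_self hp
  have hSopen : IsOpen S := by
    rw [hS]; exact isOpen_Ioo.preimage (continuous_snd.comp continuous_snd)
  have hSmeas : MeasurableSet S := hSopen.measurableSet
  set K : Set (ℝ × ℝ × ℝ) := Icc (-ρ) ρ ×ˢ Icc (-ρ) ρ ×ˢ Icc (-1) 0 with hK
  have hKc : IsCompact K := (isCompact_Icc.prod (isCompact_Icc.prod isCompact_Icc))
  have hKScl : K ⊆ Scl := by
    rw [hScl]; rintro ⟨x, y, z⟩ hp
    exact hp.2.2
  obtain ⟨C, hC⟩ := hKc.exists_bound_of_continuousOn (hc.mono hKScl)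
  refine Integrable.mono' (g := K.indicator fun _ => C) ?_ ?_ ?_
  · rw [integrable_indicator_iff hKc.measurableSet]
    refine (integrableOn_const_iff).mpr (Or.inr ?_)
    exact lt_of_le_of_lt (Measure.restrict_apply_le _ _) hKc.measure_lt_top
  · exact (hc.mono hsub).aestronglyMeasurable hSmeas
  · refine (ae_restrict_iff' hSmeas).mpr (Filter.Eventually.of_forall ?_)
    intro p hp
    by_cases hpK : p ∈ K
    · rw [indicator_of_mem hpK]; exact hC p hpK
    · rw [indicator_of_notMem hpK]
      have hzc : p.2.2 ∈ Icc (-1 : ℝ) 0 := by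
        have := hsub hp; rw [hScl] at this; exact this
      have hmax : ρ ≤ max |p.1| |p.2.1| := by
        by_contra hcon
        push_neg at hcon
        have h1 : |p.1| ≤ ρ := le_of_lt (lt_of_le_of_lt (le_max_left _ _) hcon)
        have h2 : |p.2.1| ≤ ρ := le_of_lt (lt_of_le_of_lt (le_max_right _ _) hcon)
        exact hpK ⟨abs_le.mp h1, abs_le.mp h2, hzc⟩
      rw [hz p hp hmax]; simp

lemma divergence_strip
    (μ γ : ℝ)
    (Φ Φx Φy Φz : ℝ × ℝ × ℝ → ℝ)
    (S Scl : Set (ℝ × ℝ × ℝ))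
    (hS : S = {p | p.2.2 ∈ Ioo (-1 : ℝ) 0})
    (hScl : Scl = {p | p.2.2 ∈ Icc (-1 : ℝ) 0})
    (hΦ : ContDiffOn ℝ 2 Φ Scl)
    (hΦx : ∀ p, Φx p = fderivWithin ℝ Φ Scl p (1, 0, 0))
    (hΦy : ∀ p, Φy p = fderivWithin ℝ Φ Scl p (0, 1, 0))
    (hΦz : ∀ p, Φz p = fderivWithin ℝ Φ Scl p (0, 0, 1))
    (hlap : ∀ p ∈ S,
      μ * fderivWithin ℝ Φx Scl p (1, 0, 0)
        + γ ^ 2 * μ * fderivWithin ℝ Φy Scl p (0, 1, 0)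
        + fderivWithin ℝ Φz Scl p (0, 0, 1) = 0)
    (htop : ∀ x y : ℝ, Φz (x, y, 0) = 0)
    (hbot : ∀ x y : ℝ, Φz (x, y, -1) = 0)
    (ψ ψ1 ψ2 ψ3 : ℝ × ℝ × ℝ → ℝ) (D : ℝ × ℝ × ℝ → ((ℝ × ℝ × ℝ) →L[ℝ] ℝ))
    (hψd : ∀ p ∈ Scl, HasFDerivWithinAt ψ (D p) Scl p)
    (hD1 : ∀ p ∈ Scl, D p (1, 0, 0) = ψ1 p)
    (hD2 : ∀ p ∈ Scl, D p (0, 1, 0) = ψ2 p)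
    (hD3 : ∀ p ∈ Scl, D p (0, 0, 1) = ψ3 p)
    (hψc : ContinuousOn ψ Scl) (hψ1c : ContinuousOn ψ1 Scl)
    (hψ2c : ContinuousOn ψ2 Scl) (hψ3c : ContinuousOn ψ3 Scl)
    (ρ : ℝ) (hρ : 0 ≤ ρ)
    (hsupp : ∀ p : ℝ × ℝ × ℝ, ρ ≤ max |p.1| |p.2.1| → ψ p = 0) :
    ∫ p in S, (μ * ψ1 p * Φx p + γ ^ 2 * μ * ψ2 p * Φy p + ψ3 p * Φz p) = 0 := by
  have hsub : S ⊆ Scl := by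
    rw [hS, hScl]; exact fun p hp => Ioo_subset_Icc_self hp
  have hSopen : IsOpen S := by
    rw [hS]; exact isOpen_Ioo.preimage (continuous_snd.comp continuous_snd)
  have hSmeas : MeasurableSet S := hSopen.measurableSet
  have hScl_prod : Scl = (univ : Set ℝ) ×ˢ ((univ : Set ℝ) ×ˢ Icc (-1 : ℝ) 0) := by
    rw [hScl]; ext ⟨x, y, z⟩; simp
  have hU : UniqueDiffOn ℝ Scl := by
    rw [hScl_prod]
    exact uniqueDiffOn_univ.prod (uniqueDiffOn_univ.prod (uniqueDiffOn_Icc (by norm_num)))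
  have hnhds : ∀ p ∈ S, Scl ∈ nhds p := fun p hp =>
    Filter.mem_of_superset (hSopen.mem_nhds hp) hsub
  have hΦd : DifferentiableOn ℝ Φ Scl := hΦ.differentiableOn (by norm_num)
  have hfC1 : ContDiffOn ℝ 1 (fderivWithin ℝ Φ Scl) Scl := hΦ.fderivWithin hU (by norm_num)
  have hΦxC1 : ContDiffOn ℝ 1 Φx Scl := by
    have h : Φx = fun p => (fderivWithin ℝ Φ Scl p) ((1 : ℝ), (0 : ℝ), (0 : ℝ)) := funext hΦx
    rw [h]; exact hfC1.clm_apply contDiffOn_const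
  have hΦyC1 : ContDiffOn ℝ 1 Φy Scl := by
    have h : Φy = fun p => (fderivWithin ℝ Φ Scl p) ((0 : ℝ), (1 : ℝ), (0 : ℝ)) := funext hΦy
    rw [h]; exact hfC1.clm_apply contDiffOn_const
  have hΦzC1 : ContDiffOn ℝ 1 Φz Scl := by
    have h : Φz = fun p => (fderivWithin ℝ Φ Scl p) ((0 : ℝ), (0 : ℝ), (1 : ℝ)) := funext hΦz
    rw [h]; exact hfC1.clm_apply contDiffOn_const
  have hΦxc : ContinuousOn Φx Scl := hΦxC1.continuousOn
  have hΦyc : ContinuousOn Φy Scl := hΦyC1.continuousOn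
  have hΦzc : ContinuousOn Φz Scl := hΦzC1.continuousOn
  have hΦxd : DifferentiableOn ℝ Φx Scl := hΦxC1.differentiableOn one_ne_zero
  have hΦyd : DifferentiableOn ℝ Φy Scl := hΦyC1.differentiableOn one_ne_zero
  have hΦzd : DifferentiableOn ℝ Φz Scl := hΦzC1.differentiableOn one_ne_zero
  have hgxxc : ContinuousOn (fun p => fderivWithin ℝ Φx Scl p ((1 : ℝ), 0, 0)) Scl :=
    ((hΦxC1.fderivWithin (m := 0) hU (by norm_num)).clm_apply contDiffOn_const).continuousOn
  have hgyyc : ContinuousOn (fun p => fderivWithin ℝ Φy Scl p ((0 : ℝ), 1, 0)) Scl :=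
    ((hΦyC1.fderivWithin (m := 0) hU (by norm_num)).clm_apply contDiffOn_const).continuousOn
  have hgzzc : ContinuousOn (fun p => fderivWithin ℝ Φz Scl p ((0 : ℝ), 0, 1)) Scl :=
    ((hΦzC1.fderivWithin (m := 0) hU (by norm_num)).clm_apply contDiffOn_const).continuousOn
  have hψdiff : DifferentiableOn ℝ ψ Scl := fun p hp => (hψd p hp).differentiableWithinAt
  set F1 : ℝ × ℝ × ℝ → ℝ := fun q => ψ q * (μ * Φx q) with hF1def
  set F2 : ℝ × ℝ × ℝ → ℝ := fun q => ψ q * (γ ^ 2 * μ * Φy q) with hF2def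
  set F3 : ℝ × ℝ × ℝ → ℝ := fun q => ψ q * Φz q with hF3def
  set g1 : ℝ × ℝ × ℝ → ℝ := fun p => fderivWithin ℝ F1 Scl p ((1 : ℝ), 0, 0) with hg1def
  set g2 : ℝ × ℝ × ℝ → ℝ := fun p => fderivWithin ℝ F2 Scl p ((0 : ℝ), 1, 0) with hg2def
  set g3 : ℝ × ℝ × ℝ → ℝ := fun p => fderivWithin ℝ F3 Scl p ((0 : ℝ), 0, 1) with hg3def
  have hF1don : DifferentiableOn ℝ F1 Scl :=
    hψdiff.mul (fun p hp => ((hΦxd p hp).const_mul μ))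
  have hF2don : DifferentiableOn ℝ F2 Scl :=
    hψdiff.mul (fun p hp => ((hΦyd p hp).const_mul (γ ^ 2 * μ)))
  have hF3don : DifferentiableOn ℝ F3 Scl := hψdiff.mul hΦzd
  -- product rule formulas on Scl
  have hprod1 : ∀ p ∈ Scl,
      g1 p = ψ p * (μ * fderivWithin ℝ Φx Scl p (1, 0, 0)) + (μ * Φx p) * ψ1 p := by
    intro p hp
    have hdm : DifferentiableWithinAt ℝ (fun q => μ * Φx q) Scl p := (hΦxd p hp).const_mul μ
    have h := fderivWithin_mul (𝕜 := ℝ) (hU p hp) (hψdiff p hp) hdm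
    have hψf : fderivWithin ℝ ψ Scl p = D p := (hψd p hp).fderivWithin (hU p hp)
    have hconst : fderivWithin ℝ (fun q => μ * Φx q) Scl p = μ • fderivWithin ℝ Φx Scl p :=
      fderivWithin_const_mul (hU p hp) (hΦxd p hp) μ
    have : g1 p = (ψ p • fderivWithin ℝ (fun q => μ * Φx q) Scl p
        + (μ * Φx p) • fderivWithin ℝ ψ Scl p) ((1 : ℝ), 0, 0) := by
      rw [hg1def]; simp only [hF1def]; rw [← h]; rfl
    rw [this, hψf, hconst]
    simp only [ContinuousLinearMap.add_apply, ContinuousLinearMap.smul_apply, smul_eq_mul,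
      hD1 p hp]
  have hprod2 : ∀ p ∈ Scl,
      g2 p = ψ p * (γ ^ 2 * μ * fderivWithin ℝ Φy Scl p (0, 1, 0))
        + (γ ^ 2 * μ * Φy p) * ψ2 p := by
    intro p hp
    have hdm : DifferentiableWithinAt ℝ (fun q => γ ^ 2 * μ * Φy q) Scl p :=
      (hΦyd p hp).const_mul (γ ^ 2 * μ)
    have h := fderivWithin_mul (𝕜 := ℝ) (hU p hp) (hψdiff p hp) hdm
    have hψf : fderivWithin ℝ ψ Scl p = D p := (hψd p hp).fderivWithin (hU p hp)
    have hconst : fderivWithin ℝ (fun q => γ ^ 2 * μ * Φy q) Scl p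
        = (γ ^ 2 * μ) • fderivWithin ℝ Φy Scl p :=
      fderivWithin_const_mul (hU p hp) (hΦyd p hp) (γ ^ 2 * μ)
    have : g2 p = (ψ p • fderivWithin ℝ (fun q => γ ^ 2 * μ * Φy q) Scl p
        + (γ ^ 2 * μ * Φy p) • fderivWithin ℝ ψ Scl p) ((0 : ℝ), 1, 0) := by
      rw [hg2def]; simp only [hF2def]; rw [← h]; rfl
    rw [this, hψf, hconst]
    simp only [ContinuousLinearMap.add_apply, ContinuousLinearMap.smul_apply, smul_eq_mul,
      hD2 p hp]
  have hprod3 : ∀ p ∈ Scl,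
      g3 p = ψ p * fderivWithin ℝ Φz Scl p (0, 0, 1) + Φz p * ψ3 p := by
    intro p hp
    have h := fderivWithin_mul (𝕜 := ℝ) (hU p hp) (hψdiff p hp) (hΦzd p hp)
    have hψf : fderivWithin ℝ ψ Scl p = D p := (hψd p hp).fderivWithin (hU p hp)
    have : g3 p = (ψ p • fderivWithin ℝ Φz Scl p
        + Φz p • fderivWithin ℝ ψ Scl p) ((0 : ℝ), 0, 1) := by
      rw [hg3def]; simp only [hF3def]; rw [← h]; rfl
    rw [this, hψf]
    simp only [ContinuousLinearMap.add_apply, ContinuousLinearMap.smul_apply, smul_eq_mul,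
      hD3 p hp]
  -- vanishing of the fields far away
  have hOopen : IsOpen {q : ℝ × ℝ × ℝ | ρ < max |q.1| |q.2.1|} :=
    isOpen_lt continuous_const
      ((continuous_abs.comp continuous_fst).max
        (continuous_abs.comp (continuous_fst.comp continuous_snd)))
  have hvan : ∀ (F : ℝ × ℝ × ℝ → ℝ) (v : ℝ × ℝ × ℝ),
      (∀ q : ℝ × ℝ × ℝ, ρ ≤ max |q.1| |q.2.1| → F q = 0) →
      ∀ p ∈ S, ρ < max |p.1| |p.2.1| → fderivWithin ℝ F Scl p v = 0 := by
    intro F v hF0 p hp hpmax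
    have hev : F =ᶠ[nhdsWithin p Scl] (fun _ => (0 : ℝ)) := by
      filter_upwards [mem_nhdsWithin_of_mem_nhds (hOopen.mem_nhds hpmax)] with q hq
      exact hF0 q (le_of_lt hq)
    have heq := Filter.EventuallyEq.fderivWithin_eq (𝕜 := ℝ) hev (hF0 p (le_of_lt hpmax))
    rw [heq, fderivWithin_const_apply (0 : ℝ)]
    simp
  have hg1z : ∀ p ∈ S, ρ + 1 ≤ max |p.1| |p.2.1| → g1 p = 0 := by
    intro p hp h
    exact hvan F1 _ (fun q hq => by simp [hF1def, hsupp q hq]) p hp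
      (lt_of_lt_of_le (by linarith) h)
  have hg2z : ∀ p ∈ S, ρ + 1 ≤ max |p.1| |p.2.1| → g2 p = 0 := by
    intro p hp h
    exact hvan F2 _ (fun q hq => by simp [hF2def, hsupp q hq]) p hp
      (lt_of_lt_of_le (by linarith) h)
  have hg3z : ∀ p ∈ S, ρ + 1 ≤ max |p.1| |p.2.1| → g3 p = 0 := by
    intro p hp h
    exact hvan F3 _ (fun q hq => by simp [hF3def, hsupp q hq]) p hp
      (lt_of_lt_of_le (by linarith) h)
  -- continuity of the derivative fields on the closed strip
  have hg1c : ContinuousOn g1 Scl :=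
    ContinuousOn.congr
      ((hψc.mul (continuousOn_const.mul hgxxc)).add
        ((continuousOn_const.mul hΦxc).mul hψ1c))
      (fun p hp => hprod1 p hp)
  have hg2c : ContinuousOn g2 Scl :=
    ContinuousOn.congr
      ((hψc.mul (continuousOn_const.mul hgyyc)).add
        ((continuousOn_const.mul hΦyc).mul hψ2c))
      (fun p hp => hprod2 p hp)
  have hg3c : ContinuousOn g3 Scl :=
    ContinuousOn.congr ((hψc.mul hgzzc).add (hΦzc.mul hψ3c)) (fun p hp => hprod3 p hp)
  -- integrability
  have hg1i : IntegrableOn g1 S := integrableOn_strip S Scl hS hScl g1 (ρ + 1) hg1c hg1z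
  have hg2i : IntegrableOn g2 S := integrableOn_strip S Scl hS hScl g2 (ρ + 1) hg2c hg2z
  have hg3i : IntegrableOn g3 S := integrableOn_strip S Scl hS hScl g3 (ρ + 1) hg3c hg3z
  -- measure decomposition
  have hS_prod : S = (univ : Set ℝ) ×ˢ ((univ : Set ℝ) ×ˢ Ioo (-1 : ℝ) 0) := by
    rw [hS]; ext ⟨x, y, z⟩; simp
  set ν : Measure (ℝ × ℝ) :=
    (volume : Measure ℝ).prod ((volume : Measure ℝ).restrict (Ioo (-1 : ℝ) 0)) with hν
  have hrestrict : (volume : Measure (ℝ × ℝ × ℝ)).restrict S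
      = (volume : Measure ℝ).prod ν := by
    rw [hS_prod, hν]
    calc (volume : Measure (ℝ × ℝ × ℝ)).restrict ((univ : Set ℝ) ×ˢ ((univ : Set ℝ) ×ˢ Ioo (-1 : ℝ) 0))
        = ((volume : Measure ℝ).restrict univ).prod
            ((volume : Measure (ℝ × ℝ)).restrict ((univ : Set ℝ) ×ˢ Ioo (-1 : ℝ) 0)) :=
          (Measure.prod_restrict _ _).symm
      _ = (volume : Measure ℝ).prod
            ((volume : Measure ℝ).prod ((volume : Measure ℝ).restrict (Ioo (-1 : ℝ) 0))) := by
          rw [Measure.restrict_univ]; congr 1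
          rw [show ((volume : Measure (ℝ × ℝ)).restrict ((univ : Set ℝ) ×ˢ Ioo (-1 : ℝ) 0))
              = ((volume : Measure ℝ).restrict univ).prod
                ((volume : Measure ℝ).restrict (Ioo (-1 : ℝ) 0))
            from (Measure.prod_restrict _ _).symm, Measure.restrict_univ]
  have hg1pi : Integrable g1 ((volume : Measure ℝ).prod ν) := by rw [← hrestrict]; exact hg1i
  have hg2pi : Integrable g2 ((volume : Measure ℝ).prod ν) := by rw [← hrestrict]; exact hg2i
  have hg3pi : Integrable g3 ((volume : Measure ℝ).prod ν) := by rw [← hrestrict]; exact hg3i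
  -- slice facts
  have hmapsz : ∀ x y : ℝ, ∀ z ∈ Icc (-1 : ℝ) 0, ((x, y, z) : ℝ × ℝ × ℝ) ∈ Scl := by
    intro x y z hz; rw [hScl]; exact hz
  have hlinez : ∀ x y : ℝ, Continuous (fun z : ℝ => ((x, y, z) : ℝ × ℝ × ℝ)) := by
    intro x y; exact continuous_const.prodMk (continuous_const.prodMk continuous_id)
  have hlinex : ∀ y z : ℝ, Continuous (fun x : ℝ => ((x, y, z) : ℝ × ℝ × ℝ)) := by
    intro y z; exact continuous_id.prodMk continuous_const
  have hliney : ∀ x z : ℝ, Continuous (fun y : ℝ => ((x, y, z) : ℝ × ℝ × ℝ)) := by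
    intro x z; exact continuous_const.prodMk (continuous_id.prodMk continuous_const)
  have hF3c : ContinuousOn F3 Scl := hψc.mul hΦzc
  -- FTC in the vertical direction
  have hFTCz : ∀ x y : ℝ, (∫ z in Ioo (-1 : ℝ) 0, g3 (x, y, z)) = 0 := by
    intro x y
    have hmaps : MapsTo (fun z : ℝ => ((x, y, z) : ℝ × ℝ × ℝ)) (Icc (-1 : ℝ) 0) Scl :=
      fun z hz => hmapsz x y z hz
    have hcont : ContinuousOn (fun z => F3 (x, y, z)) (Icc (-1 : ℝ) 0) :=
      hF3c.comp (hlinez x y).continuousOn hmaps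
    have hder : ∀ z ∈ Ioo (-1 : ℝ) 0,
        HasDerivWithinAt (fun z => F3 (x, y, z)) (g3 (x, y, z)) (Ioi z) z := by
      intro z hz
      have hpS : ((x, y, z) : ℝ × ℝ × ℝ) ∈ S := by rw [hS]; exact hz
      have hF3d : HasFDerivAt F3 (fderivWithin ℝ F3 Scl (x, y, z)) (x, y, z) :=
        ((hF3don _ (hsub hpS)).hasFDerivWithinAt).hasFDerivAt (hnhds _ hpS)
      have hl : HasDerivAt (fun z : ℝ => ((x, y, z) : ℝ × ℝ × ℝ)) ((0 : ℝ), (0 : ℝ), (1 : ℝ)) z :=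
        (hasDerivAt_const z x).prodMk ((hasDerivAt_const z y).prodMk (hasDerivAt_id z))
      exact (hF3d.comp_hasDerivAt z hl).hasDerivWithinAt
    have hti : IntervalIntegrable (fun z => g3 (x, y, z)) volume (-1 : ℝ) 0 := by
      apply ContinuousOn.intervalIntegrable
      rw [uIcc_of_le (by norm_num : (-1 : ℝ) ≤ 0)]
      exact hg3c.comp (hlinez x y).continuousOn hmaps
    have hFTC := intervalIntegral.integral_eq_sub_of_hasDeriv_right_of_le
      (by norm_num : (-1 : ℝ) ≤ 0) hcont hder hti
    have h0 : F3 (x, y, 0) = 0 := by simp only [hF3def]; rw [htop x y]; ring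
    have h1 : F3 (x, y, -1) = 0 := by simp only [hF3def]; rw [hbot x y]; ring
    calc (∫ z in Ioo (-1 : ℝ) 0, g3 (x, y, z))
        = ∫ z in Ioc (-1 : ℝ) 0, g3 (x, y, z) := (integral_Ioc_eq_integral_Ioo).symm
      _ = ∫ z in (-1 : ℝ)..0, g3 (x, y, z) :=
          (intervalIntegral.integral_of_le (by norm_num : (-1 : ℝ) ≤ 0)).symm
      _ = F3 (x, y, 0) - F3 (x, y, -1) := hFTC
      _ = 0 := by rw [h0, h1]; ring
  -- FTC in the x direction
  have hFTCx : ∀ y z : ℝ, z ∈ Ioo (-1 : ℝ) 0 → (∫ x : ℝ, g1 (x, y, z)) = 0 := by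
    intro y z hz
    have hzc : z ∈ Icc (-1 : ℝ) 0 := Ioo_subset_Icc_self hz
    have hmaps : MapsTo (fun x : ℝ => ((x, y, z) : ℝ × ℝ × ℝ)) univ Scl := by
      intro x _; rw [hScl]; exact hzc
    have hout : ∀ x : ℝ, x ∉ Ioc (-(ρ + 1)) (ρ + 1) → g1 (x, y, z) = 0 := by
      intro x hx
      have habs : ρ + 1 ≤ |x| := by
        rw [mem_Ioc] at hx; push_neg at hx
        rcases le_or_gt x (-(ρ + 1)) with h | h
        · rw [abs_of_nonpos (by linarith)]; linarith
        · have := hx h; exact le_trans (le_of_lt this) (le_abs_self x)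
      exact hg1z (x, y, z) (by rw [hS]; exact hz) (le_trans habs (le_max_left _ _))
    have hder : ∀ x ∈ uIcc (-(ρ + 1)) (ρ + 1),
        HasDerivAt (fun x => F1 (x, y, z)) (g1 (x, y, z)) x := by
      intro x _
      have hpS : ((x, y, z) : ℝ × ℝ × ℝ) ∈ S := by rw [hS]; exact hz
      have hF1d : HasFDerivAt F1 (fderivWithin ℝ F1 Scl (x, y, z)) (x, y, z) :=
        ((hF1don _ (hsub hpS)).hasFDerivWithinAt).hasFDerivAt (hnhds _ hpS)
      have hl : HasDerivAt (fun x : ℝ => ((x, y, z) : ℝ × ℝ × ℝ)) ((1 : ℝ), (0 : ℝ), (0 : ℝ)) x :=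
        (hasDerivAt_id x).prodMk ((hasDerivAt_const x y).prodMk (hasDerivAt_const x z))
      exact hF1d.comp_hasDerivAt x hl
    have hcs : Continuous (fun x => g1 (x, y, z)) := by
      rw [← continuousOn_univ]
      exact hg1c.comp (hlinex y z).continuousOn hmaps
    have hFTC := intervalIntegral.integral_eq_sub_of_hasDerivAt hder
      (hcs.intervalIntegrable _ _)
    have habs1 : ρ ≤ max |(ρ + 1 : ℝ)| |y| :=
      le_trans (by rw [abs_of_nonneg (show (0:ℝ) ≤ ρ + 1 by linarith)]; linarith)
        (le_max_left _ _)
    have habs2 : ρ ≤ max |(-(ρ + 1) : ℝ)| |y| :=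
      le_trans (by rw [abs_neg, abs_of_nonneg (show (0:ℝ) ≤ ρ + 1 by linarith)]; linarith)
        (le_max_left _ _)
    have hend1 : F1 (ρ + 1, y, z) = 0 := by
      simp only [hF1def]
      rw [hsupp (ρ + 1, y, z) habs1]; ring
    have hend2 : F1 (-(ρ + 1), y, z) = 0 := by
      simp only [hF1def]
      rw [hsupp (-(ρ + 1), y, z) habs2]; ring
    calc (∫ x : ℝ, g1 (x, y, z))
        = ∫ x in Ioc (-(ρ + 1)) (ρ + 1), g1 (x, y, z) :=
          (setIntegral_eq_integral_of_forall_compl_eq_zero hout).symm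
      _ = ∫ x in (-(ρ + 1))..(ρ + 1), g1 (x, y, z) :=
          (intervalIntegral.integral_of_le (by linarith)).symm
      _ = F1 (ρ + 1, y, z) - F1 (-(ρ + 1), y, z) := hFTC
      _ = 0 := by rw [hend1, hend2]; ring
  -- FTC in the y direction
  have hFTCy : ∀ x z : ℝ, z ∈ Ioo (-1 : ℝ) 0 → (∫ y : ℝ, g2 (x, y, z)) = 0 := by
    intro x z hz
    have hzc : z ∈ Icc (-1 : ℝ) 0 := Ioo_subset_Icc_self hz
    have hmaps : MapsTo (fun y : ℝ => ((x, y, z) : ℝ × ℝ × ℝ)) univ Scl := by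
      intro y _; rw [hScl]; exact hzc
    have hout : ∀ y : ℝ, y ∉ Ioc (-(ρ + 1)) (ρ + 1) → g2 (x, y, z) = 0 := by
      intro y hy
      have habs : ρ + 1 ≤ |y| := by
        rw [mem_Ioc] at hy; push_neg at hy
        rcases le_or_gt y (-(ρ + 1)) with h | h
        · rw [abs_of_nonpos (by linarith)]; linarith
        · have := hy h; exact le_trans (le_of_lt this) (le_abs_self y)
      exact hg2z (x, y, z) (by rw [hS]; exact hz) (le_trans habs (le_max_right _ _))
    have hder : ∀ y ∈ uIcc (-(ρ + 1)) (ρ + 1),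
        HasDerivAt (fun y => F2 (x, y, z)) (g2 (x, y, z)) y := by
      intro y _
      have hpS : ((x, y, z) : ℝ × ℝ × ℝ) ∈ S := by rw [hS]; exact hz
      have hF2d : HasFDerivAt F2 (fderivWithin ℝ F2 Scl (x, y, z)) (x, y, z) :=
        ((hF2don _ (hsub hpS)).hasFDerivWithinAt).hasFDerivAt (hnhds _ hpS)
      have hl : HasDerivAt (fun y : ℝ => ((x, y, z) : ℝ × ℝ × ℝ)) ((0 : ℝ), (1 : ℝ), (0 : ℝ)) y :=
        (hasDerivAt_const y x).prodMk ((hasDerivAt_id y).prodMk (hasDerivAt_const y z))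
      exact hF2d.comp_hasDerivAt y hl
    have hcs : Continuous (fun y => g2 (x, y, z)) := by
      rw [← continuousOn_univ]
      exact hg2c.comp (hliney x z).continuousOn hmaps
    have hFTC := intervalIntegral.integral_eq_sub_of_hasDerivAt hder
      (hcs.intervalIntegrable _ _)
    have habs1 : ρ ≤ max |x| |(ρ + 1 : ℝ)| :=
      le_trans (by rw [abs_of_nonneg (show (0:ℝ) ≤ ρ + 1 by linarith)]; linarith)
        (le_max_right _ _)
    have habs2 : ρ ≤ max |x| |(-(ρ + 1) : ℝ)| :=
      le_trans (by rw [abs_neg, abs_of_nonneg (show (0:ℝ) ≤ ρ + 1 by linarith)]; linarith)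
        (le_max_right _ _)
    have hend1 : F2 (x, ρ + 1, z) = 0 := by
      simp only [hF2def]
      rw [hsupp (x, ρ + 1, z) habs1]; ring
    have hend2 : F2 (x, -(ρ + 1), z) = 0 := by
      simp only [hF2def]
      rw [hsupp (x, -(ρ + 1), z) habs2]; ring
    calc (∫ y : ℝ, g2 (x, y, z))
        = ∫ y in Ioc (-(ρ + 1)) (ρ + 1), g2 (x, y, z) :=
          (setIntegral_eq_integral_of_forall_compl_eq_zero hout).symm
      _ = ∫ y in (-(ρ + 1))..(ρ + 1), g2 (x, y, z) :=
          (intervalIntegral.integral_of_le (by linarith)).symm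
      _ = F2 (x, ρ + 1, z) - F2 (x, -(ρ + 1), z) := hFTC
      _ = 0 := by rw [hend1, hend2]; ring
  -- the three integrals vanish
  have haeq : ∀ᵐ q ∂ν, q.2 ∈ Ioo (-1 : ℝ) 0 := by
    rw [ae_iff]
    have hset : {q : ℝ × ℝ | ¬ q.2 ∈ Ioo (-1 : ℝ) 0} = (univ : Set ℝ) ×ˢ (Ioo (-1 : ℝ) 0)ᶜ := by
      ext ⟨a, b⟩; simp
    rw [hset, hν, Measure.prod_prod, Measure.restrict_apply measurableSet_Ioo.compl]
    simp
  have hIz : (∫ p in S, g3 p) = 0 := by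
    rw [hrestrict]
    rw [integral_prod g3 hg3pi]
    have hae : ∀ᵐ x : ℝ, (∫ q, g3 (x, q) ∂ν) = 0 := by
      filter_upwards [hg3pi.prod_right_ae] with x hx
      rw [integral_prod _ hx]
      have : ∀ y : ℝ, (∫ z in Ioo (-1 : ℝ) 0, g3 (x, y, z)) = 0 := fun y => hFTCz x y
      calc (∫ y : ℝ, ∫ z in Ioo (-1 : ℝ) 0, g3 (x, y, z))
          = ∫ y : ℝ, (0 : ℝ) := by
            congr 1; funext y; exact this y
        _ = 0 := integral_zero _ _
    rw [integral_congr_ae hae]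
    simp
  have hIx : (∫ p in S, g1 p) = 0 := by
    rw [hrestrict]
    rw [integral_prod_symm g1 hg1pi]
    have hae : ∀ᵐ q ∂ν, (∫ x : ℝ, g1 (x, q)) = 0 := by
      filter_upwards [haeq] with q hq
      exact hFTCx q.1 q.2 hq
    rw [integral_congr_ae hae]
    simp
  have hIy : (∫ p in S, g2 p) = 0 := by
    rw [hrestrict]
    rw [integral_prod g2 hg2pi]
    have hae : ∀ᵐ x : ℝ, (∫ q, g2 (x, q) ∂ν) = 0 := by
      filter_upwards [hg2pi.prod_right_ae] with x hx
      rw [integral_prod_symm _ hx]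
      have hae2 : ∀ᵐ z ∂((volume : Measure ℝ).restrict (Ioo (-1 : ℝ) 0)),
          (∫ y : ℝ, g2 (x, y, z)) = 0 := by
        filter_upwards [ae_restrict_mem measurableSet_Ioo] with z hz
        exact hFTCy x z hz
      rw [integral_congr_ae hae2]
      simp
    rw [integral_congr_ae hae]
    simp
  -- combine
  have hsum : (∫ p in S, (g1 p + g2 p + g3 p)) = 0 := by
    have e1 : (∫ p in S, (g1 p + g2 p + g3 p))
        = (∫ p in S, (g1 p + g2 p)) + ∫ p in S, g3 p := integral_add (hg1i.add hg2i) hg3i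
    have e2 : (∫ p in S, (g1 p + g2 p)) = (∫ p in S, g1 p) + ∫ p in S, g2 p :=
      integral_add hg1i hg2i
    rw [e1, e2, hIx, hIy, hIz]; ring
  have hpt : ∀ p ∈ S, μ * ψ1 p * Φx p + γ ^ 2 * μ * ψ2 p * Φy p + ψ3 p * Φz p
      = g1 p + g2 p + g3 p := by
    intro p hp
    rw [hprod1 p (hsub hp), hprod2 p (hsub hp), hprod3 p (hsub hp)]
    have hl := hlap p hp
    linear_combination (-(ψ p)) * hl
  calc (∫ p in S, (μ * ψ1 p * Φx p + γ ^ 2 * μ * ψ2 p * Φy p + ψ3 p * Φz p))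
      = ∫ p in S, (g1 p + g2 p + g3 p) :=
        setIntegral_congr_fun hSmeas (fun p hp => hpt p hp)
    _ = 0 := hsum



noncomputable def bb : ContDiffBump (0 : ℝ) := ⟨1, 2, one_pos, one_lt_two⟩

lemma bb_deriv_bound : ∃ C : ℝ, 1 ≤ C ∧ ∀ t : ℝ, |deriv (⇑bb) t| ≤ C := by
  have hd : Continuous (deriv (⇑bb)) := (contDiff_infty_iff_deriv.mp bb.contDiff).2.continuous
  obtain ⟨C0, hC0⟩ := (bb.hasCompactSupport.deriv).exists_bound_of_continuous hd
  exact ⟨max C0 1, le_max_right _ _,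
    fun t => le_trans (by simpa using hC0 t) (le_max_left _ _)⟩

lemma bb_deriv_zero_inner (t : ℝ) (ht : |t| < 1) : deriv (⇑bb) t = 0 := by
  have hev : (⇑bb) =ᶠ[nhds t] (fun _ => (1 : ℝ)) := by
    filter_upwards [Metric.isOpen_ball.mem_nhds
      (show t ∈ Metric.ball (0 : ℝ) 1 by simpa [Real.dist_eq] using ht)] with s hs
    exact bb.one_of_mem_closedBall (Metric.ball_subset_closedBall hs)
  rw [hev.deriv_eq]
  exact deriv_const t 1

lemma bb_deriv_zero_outer (t : ℝ) (ht : 2 < |t|) : deriv (⇑bb) t = 0 := by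
  have hop : IsOpen {s : ℝ | 2 < |s|} := isOpen_lt continuous_const continuous_abs
  have hev : (⇑bb) =ᶠ[nhds t] (fun _ => (0 : ℝ)) := by
    filter_upwards [hop.mem_nhds ht] with s hs
    exact bb.zero_of_le_dist (by simpa [Real.dist_eq, bb] using le_of_lt hs)
  rw [hev.deriv_eq]
  exact deriv_const t 0

lemma T_facts (M : ℝ) (hM : 0 ≤ M) :
    ∃ T θf : ℝ → ℝ,
      (∀ t, HasDerivAt T (θf t) t) ∧ Continuous T ∧ Continuous θf ∧
      (∀ t, 0 ≤ θf t) ∧ (∀ t, θf t ≤ 1) ∧ (∀ t, |t| ≤ M + 1 → θf t = 1) ∧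
      (∀ t, |T t| ≤ M + 2) := by
  set θ : ContDiffBump (0 : ℝ) := ⟨M + 1, M + 2, by linarith, by linarith⟩ with hθ
  set T : ℝ → ℝ := fun t => ∫ s in (0:ℝ)..t, θ s with hT
  have hTd : ∀ t, HasDerivAt T (θ t) t := fun t =>
    (θ.continuous.integral_hasStrictDerivAt 0 t).hasDerivAt
  have hTc : Continuous T := continuous_iff_continuousAt.mpr fun t => (hTd t).continuousAt
  have hbd1 : ∀ t : ℝ, |t| ≤ M + 2 → |T t| ≤ M + 2 := by
    intro t ht
    have hnorm : ‖∫ s in (0:ℝ)..t, θ s‖ ≤ 1 * |t - 0| := by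
      apply intervalIntegral.norm_integral_le_of_norm_le_const
      intro s _
      rw [Real.norm_eq_abs, abs_of_nonneg θ.nonneg]
      exact θ.le_one
    calc |T t| ≤ 1 * |t - 0| := by simpa [hT, Real.norm_eq_abs] using hnorm
      _ ≤ M + 2 := by rw [one_mul, sub_zero]; exact ht
  have hzero_seg : ∀ a b : ℝ, (∀ s ∈ uIcc a b, M + 2 ≤ |s|) → (∫ s in a..b, θ s) = 0 := by
    intro a b h
    have heq : EqOn (fun s => θ s) (fun _ => (0:ℝ)) (uIcc a b) := fun s hs =>
      θ.zero_of_le_dist (by rw [Real.dist_eq, sub_zero]; exact h s hs)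
    rw [intervalIntegral.integral_congr heq]
    simp
  have hTbound : ∀ t, |T t| ≤ M + 2 := by
    intro t
    rcases le_or_gt (|t|) (M + 2) with h | h
    · exact hbd1 t h
    · rcases le_total 0 t with ht | ht
      · have ht2 : M + 2 < t := by rwa [abs_of_nonneg ht] at h
        have hadj : T t = T (M + 2) + ∫ s in (M + 2)..t, θ s := by
          rw [hT]
          exact (intervalIntegral.integral_add_adjacent_intervals
            (θ.continuous.intervalIntegrable _ _) (θ.continuous.intervalIntegrable _ _)).symm
        have hz : (∫ s in (M + 2)..t, θ s) = 0 := by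
          apply hzero_seg
          intro s hs
          rw [uIcc_of_le (le_of_lt ht2)] at hs
          calc (M + 2 : ℝ) ≤ s := hs.1
            _ ≤ |s| := le_abs_self s
        rw [hadj, hz, add_zero]
        exact hbd1 _ (by rw [abs_of_nonneg (by linarith)])
      · have ht2 : t < -(M + 2) := by rw [abs_of_nonpos ht] at h; linarith
        have hadj : T t = T (-(M + 2)) + ∫ s in (-(M + 2))..t, θ s := by
          rw [hT]
          exact (intervalIntegral.integral_add_adjacent_intervals
            (θ.continuous.intervalIntegrable _ _) (θ.continuous.intervalIntegrable _ _)).symm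
        have hz : (∫ s in (-(M + 2))..t, θ s) = 0 := by
          apply hzero_seg
          intro s hs
          rw [uIcc_of_ge (le_of_lt ht2)] at hs
          have hs2 : s ≤ -(M + 2) := hs.2
          rw [abs_of_nonpos (by linarith)]
          linarith
        rw [hadj, hz, add_zero]
        exact hbd1 _ (by rw [abs_neg, abs_of_nonneg (by linarith)])
  refine ⟨T, fun t => θ t, hTd, hTc, θ.continuous, fun t => θ.nonneg, fun t => θ.le_one,
    fun t ht => θ.one_of_mem_closedBall ?_, hTbound⟩
  show t ∈ Metric.closedBall (0:ℝ) (M + 1)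
  rw [Metric.mem_closedBall, Real.dist_eq, sub_zero]
  exact ht

end NeumannAux

open NeumannAux

/-- Uniqueness for the anisotropic Laplace problem on a flat strip with
homogeneous Neumann conditions at the top and bottom: the scaled gradient
of any solution with square-integrable scaled gradient vanishes. -/
theorem neumann_laplace_strip_uniqueness
    (μ γ : ℝ) (hμ : 0 < μ) (hγ : 0 < γ) (hγ1 : γ ≤ 1)
    (Φ Φx Φy Φz : ℝ × ℝ × ℝ → ℝ)
    (S Scl : Set (ℝ × ℝ × ℝ))
    (hS : S = {p | p.2.2 ∈ Ioo (-1 : ℝ) 0})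
    (hScl : Scl = {p | p.2.2 ∈ Icc (-1 : ℝ) 0})
    (hΦ : ContDiffOn ℝ 2 Φ Scl)
    (hΦx : ∀ p, Φx p = fderivWithin ℝ Φ Scl p (1, 0, 0))
    (hΦy : ∀ p, Φy p = fderivWithin ℝ Φ Scl p (0, 1, 0))
    (hΦz : ∀ p, Φz p = fderivWithin ℝ Φ Scl p (0, 0, 1))
    (hlap : ∀ p ∈ S,
      μ * fderivWithin ℝ Φx Scl p (1, 0, 0)
        + γ ^ 2 * μ * fderivWithin ℝ Φy Scl p (0, 1, 0)
        + fderivWithin ℝ Φz Scl p (0, 0, 1) = 0)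
    (htop : ∀ x y : ℝ, Φz (x, y, 0) = 0)
    (hbot : ∀ x y : ℝ, Φz (x, y, -1) = 0)
    (hL2 : IntegrableOn
      (fun p => μ * (Φx p) ^ 2 + γ ^ 2 * μ * (Φy p) ^ 2 + (Φz p) ^ 2) S) :
    ∀ p ∈ S,
      Real.sqrt μ * Φx p = 0 ∧ γ * Real.sqrt μ * Φy p = 0 ∧ Φz p = 0 := by
  have hsub : S ⊆ Scl := by
    rw [hS, hScl]; exact fun p hp => Ioo_subset_Icc_self hp
  have hSopen : IsOpen S := by
    rw [hS]; exact isOpen_Ioo.preimage (continuous_snd.comp continuous_snd)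
  have hSmeas : MeasurableSet S := hSopen.measurableSet
  have hScl_prod : Scl = (univ : Set ℝ) ×ˢ ((univ : Set ℝ) ×ˢ Icc (-1 : ℝ) 0) := by
    rw [hScl]; ext ⟨x, y, z⟩; simp
  have hU : UniqueDiffOn ℝ Scl := by
    rw [hScl_prod]
    exact uniqueDiffOn_univ.prod (uniqueDiffOn_univ.prod (uniqueDiffOn_Icc (by norm_num)))
  have hnhds : ∀ p ∈ S, Scl ∈ nhds p := fun p hp =>
    Filter.mem_of_superset (hSopen.mem_nhds hp) hsub
  have hΦd : DifferentiableOn ℝ Φ Scl := hΦ.differentiableOn (by norm_num)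
  have hfC1 : ContDiffOn ℝ 1 (fderivWithin ℝ Φ Scl) Scl := hΦ.fderivWithin hU (by norm_num)
  have hΦxC1 : ContDiffOn ℝ 1 Φx Scl := by
    have h : Φx = fun p => (fderivWithin ℝ Φ Scl p) ((1 : ℝ), (0 : ℝ), (0 : ℝ)) := funext hΦx
    rw [h]; exact hfC1.clm_apply contDiffOn_const
  have hΦyC1 : ContDiffOn ℝ 1 Φy Scl := by
    have h : Φy = fun p => (fderivWithin ℝ Φ Scl p) ((0 : ℝ), (1 : ℝ), (0 : ℝ)) := funext hΦy
    rw [h]; exact hfC1.clm_apply contDiffOn_const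
  have hΦzC1 : ContDiffOn ℝ 1 Φz Scl := by
    have h : Φz = fun p => (fderivWithin ℝ Φ Scl p) ((0 : ℝ), (0 : ℝ), (1 : ℝ)) := funext hΦz
    rw [h]; exact hfC1.clm_apply contDiffOn_const
  have hΦxc : ContinuousOn Φx Scl := hΦxC1.continuousOn
  have hΦyc : ContinuousOn Φy Scl := hΦyC1.continuousOn
  have hΦzc : ContinuousOn Φz Scl := hΦzC1.continuousOn
  set w : ℝ × ℝ × ℝ → ℝ := fun p => μ * (Φx p) ^ 2 + γ ^ 2 * μ * (Φy p) ^ 2 + (Φz p) ^ 2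
    with hwdef
  have hwc : ContinuousOn w Scl :=
    ((continuousOn_const.mul (hΦxc.pow 2)).add
      (continuousOn_const.mul (hΦyc.pow 2))).add (hΦzc.pow 2)
  have hwnn : ∀ p, 0 ≤ w p := by
    intro p
    have h1 : 0 ≤ μ * (Φx p) ^ 2 := mul_nonneg hμ.le (sq_nonneg _)
    have h2 : 0 ≤ γ ^ 2 * μ * (Φy p) ^ 2 :=
      mul_nonneg (mul_nonneg (sq_nonneg γ) hμ.le) (sq_nonneg _)
    have h3 : 0 ≤ (Φz p) ^ 2 := sq_nonneg _
    simp only [hwdef]; linarith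
  clear_value w
  obtain ⟨C, hC1, hCb⟩ := bb_deriv_bound
  set An : ℕ → Set (ℝ × ℝ × ℝ) := fun n => {p | (n : ℝ) ≤ max |p.1| |p.2.1|} with hAndef
  have hAnmeas : ∀ n, MeasurableSet (An n) := fun n =>
    (isClosed_le continuous_const
      ((continuous_abs.comp continuous_fst).max
        (continuous_abs.comp (continuous_fst.comp continuous_snd)))).measurableSet
  set ε : ℕ → ℝ := fun n => ∫ p in S, (An n).indicator w p with hεdef
  have hεnn : ∀ n, 0 ≤ ε n := fun n =>
    integral_nonneg (fun p => indicator_nonneg (fun q _ => hwnn q) p)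
  clear_value An ε
  have hεlim : Filter.Tendsto ε Filter.atTop (nhds 0) := by
    have h0 : (0 : ℝ) = ∫ p in S, (0 : ℝ) := by simp
    rw [hεdef, h0]
    apply tendsto_integral_of_dominated_convergence w
    · exact fun n => (hL2.aestronglyMeasurable).indicator (hAnmeas n)
    · exact hL2
    · intro n
      refine Filter.Eventually.of_forall (fun p => ?_)
      rw [Real.norm_eq_abs]
      by_cases hp : p ∈ An n
      · rw [indicator_of_mem hp, abs_of_nonneg (hwnn p)]
      · rw [indicator_of_notMem hp]; simpa using hwnn p
    · refine Filter.Eventually.of_forall (fun p => ?_)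
      obtain ⟨N, hN⟩ := exists_nat_gt (max |p.1| |p.2.1|)
      have hev : ∀ n : ℕ, N ≤ n → (An n).indicator w p = 0 := by
        intro n hn
        have hgt : max |p.1| |p.2.1| < (n : ℝ) :=
          lt_of_lt_of_le hN (by exact_mod_cast hn)
        have : p ∉ An n := by
          simp only [hAndef, mem_setOf_eq]
          push_neg
          exact hgt
        rw [indicator_of_notMem this]
      refine Filter.Tendsto.congr' ?_ tendsto_const_nhds
      rw [Filter.EventuallyEq, Filter.eventually_atTop]
      exact ⟨N, fun n hn => (hev n hn).symm⟩
  have key : ∀ p ∈ S, w p = 0 := by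
    intro p₀ hp₀
    by_contra hne
    have hwp : 0 < w p₀ := lt_of_le_of_ne (hwnn p₀) (Ne.symm hne)
    have hwat : ContinuousAt w p₀ := (hwc p₀ (hsub hp₀)).continuousAt (hnhds p₀ hp₀)
    have hmem : S ∩ w ⁻¹' (Ioi (w p₀ / 2)) ∈ nhds p₀ :=
      Filter.inter_mem (hSopen.mem_nhds hp₀) (hwat (Ioi_mem_nhds (half_lt_self hwp)))
    obtain ⟨r, hr0, hrsub⟩ := Metric.nhds_basis_closedBall.mem_iff.mp hmem
    set B := Metric.closedBall p₀ r with hBdef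
    have hBS : B ⊆ S := fun q hq => (hrsub hq).1
    have hBw : ∀ q ∈ B, w p₀ / 2 ≤ w q := fun q hq => le_of_lt (hrsub hq).2
    have hBmeas : MeasurableSet B := Metric.isClosed_closedBall.measurableSet
    have hBcomp : IsCompact B := isCompact_closedBall p₀ r
    obtain ⟨M₀, hM₀⟩ :=
      hBcomp.exists_bound_of_continuousOn (hΦ.continuousOn.mono (hBS.trans hsub))
    set M := max M₀ 0 with hMdef
    have hM0 : 0 ≤ M := le_max_right _ _
    have hMB : ∀ q ∈ B, |Φ q| ≤ M := fun q hq =>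
      le_trans (by simpa using hM₀ q hq) (le_max_left _ _)
    clear_value M
    obtain ⟨m, hm'⟩ := exists_nat_ge (max |p₀.1| |p₀.2.1| + r)
    have hmB : ∀ q ∈ B, max |q.1| |q.2.1| ≤ (m : ℝ) := by
      intro q hq
      have hd : dist q p₀ ≤ r := Metric.mem_closedBall.mp hq
      have h1 : dist q.1 p₀.1 ≤ dist q p₀ := by rw [Prod.dist_eq]; exact le_max_left _ _
      have h2 : dist q.2.1 p₀.2.1 ≤ dist q p₀ := by
        rw [Prod.dist_eq]
        refine le_trans ?_ (le_max_right _ _)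
        rw [Prod.dist_eq]; exact le_max_left _ _
      have e1 : |q.1| ≤ |p₀.1| + r := by
        have hh : |q.1 - p₀.1| ≤ r := by rw [← Real.dist_eq]; exact le_trans h1 hd
        calc |q.1| = |q.1 - p₀.1 + p₀.1| := by ring_nf
          _ ≤ |q.1 - p₀.1| + |p₀.1| := abs_add_le _ _
          _ ≤ |p₀.1| + r := by linarith
      have e2 : |q.2.1| ≤ |p₀.2.1| + r := by
        have hh : |q.2.1 - p₀.2.1| ≤ r := by rw [← Real.dist_eq]; exact le_trans h2 hd
        calc |q.2.1| = |q.2.1 - p₀.2.1 + p₀.2.1| := by ring_nf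
          _ ≤ |q.2.1 - p₀.2.1| + |p₀.2.1| := abs_add_le _ _
          _ ≤ |p₀.2.1| + r := by linarith
      have hmax : max |q.1| |q.2.1| ≤ max |p₀.1| |p₀.2.1| + r := by
        apply max_le
        · exact le_trans e1 (add_le_add_left (le_max_left _ _) r)
        · exact le_trans e2 (add_le_add_left (le_max_right _ _) r)
      linarith
    have hVpos : 0 < (volume B).toReal := by
      have h1 : 0 < volume B := Metric.measure_closedBall_pos volume p₀ hr0
      have h2 : volume B < ⊤ := hBcomp.measure_lt_top
      exact ENNReal.toReal_pos (ne_of_gt h1) (ne_of_lt h2)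
    clear_value B
    set V := (volume B).toReal with hVdef
    set c := w p₀ / 2 with hcdef
    have hc0 : 0 < c := by rw [hcdef]; exact half_pos hwp
    have hIB : IntegrableOn w B := hL2.mono_set hBS
    have hlow : c * V ≤ ∫ p in B, w p := by
      have h1 : (∫ _ in B, c) ≤ ∫ p in B, w p :=
        setIntegral_mono_on
          ((integrableOn_const_iff).mpr (Or.inr hBcomp.measure_lt_top)) hIB hBmeas hBw
      rw [setIntegral_const, smul_eq_mul] at h1
      calc c * V = V * c := mul_comm _ _
        _ ≤ ∫ p in B, w p := h1
    clear_value V c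
    have hC0 : 0 < C := lt_of_lt_of_le one_pos hC1
    set K := 16 * μ * (M + 2) ^ 2 * C ^ 2 with hKdef
    have hK0 : 0 < K := by rw [hKdef]; positivity
    clear_value K
    have master : ∀ n : ℕ, (m : ℝ) ≤ (n : ℝ) → 1 ≤ (n : ℝ) → ∀ δ : ℝ, 0 < δ →
        c * V ≤ δ * K + (1 / (2 * δ)) * ε n := by
      intro n hmn h1n δ hδ
      obtain ⟨T, θf, hTd, hTc, hθc, hθ0, hθ1le, hθone, hTb⟩ := T_facts M hM0
      set R := (n : ℝ) with hRdef
      have hR0 : 0 < R := lt_of_lt_of_le one_pos h1n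
      set ηf : ℝ → ℝ := fun x => bb (x / R) with hηdef
      set ηd : ℝ → ℝ := fun x => deriv (⇑bb) (x / R) * (1 / R) with hηddef
      have hηderiv : ∀ x, HasDerivAt ηf (ηd x) x := by
        intro x
        have hb : HasDerivAt (⇑bb) (deriv (⇑bb) (x / R)) (x / R) :=
          (((bb.contDiff (n := 1)).differentiable one_ne_zero).differentiableAt).hasDerivAt
        have hl : HasDerivAt (fun x : ℝ => x / R) (1 / R) x := by
          simpa using (hasDerivAt_id x).div_const R
        exact HasDerivAt.comp (h₂ := ⇑bb) (h := fun x : ℝ => x / R) x hb hl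
      have hηcont : Continuous ηf := bb.continuous.comp (continuous_id.div_const R)
      have hηdcont : Continuous ηd :=
        (((contDiff_infty_iff_deriv.mp bb.contDiff).2.continuous).comp
          (continuous_id.div_const R)).mul continuous_const
      have hηone : ∀ x : ℝ, |x| ≤ R → ηf x = 1 := by
        intro x hx
        apply bb.one_of_mem_closedBall
        show x / R ∈ Metric.closedBall (0 : ℝ) 1
        rw [Metric.mem_closedBall, Real.dist_eq, sub_zero, abs_div, abs_of_pos hR0,
          div_le_one hR0]
        exact hx
      have hηzero : ∀ x : ℝ, 2 * R ≤ |x| → ηf x = 0 := by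
        intro x hx
        apply bb.zero_of_le_dist
        show (2 : ℝ) ≤ dist (x / R) 0
        rw [Real.dist_eq, sub_zero, abs_div, abs_of_pos hR0, le_div_iff₀ hR0]
        linarith
      have hηnn : ∀ x, 0 ≤ ηf x := fun x => bb.nonneg
      have hηle1 : ∀ x, ηf x ≤ 1 := fun x => bb.le_one
      have hηdb : ∀ x, |ηd x| ≤ C / R := by
        intro x
        rw [hηddef]
        simp only []
        rw [abs_mul, abs_of_pos (by positivity : (0:ℝ) < 1 / R)]
        calc |deriv (⇑bb) (x / R)| * (1 / R) ≤ C * (1 / R) :=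
              mul_le_mul_of_nonneg_right (hCb _) (by positivity)
          _ = C / R := by ring
      have hηdzero : ∀ x : ℝ, |x| < R ∨ 2 * R < |x| → ηd x = 0 := by
        intro x hx
        have hd0 : deriv (⇑bb) (x / R) = 0 := by
          rcases hx with h | h
          · exact bb_deriv_zero_inner _ (by
              rw [abs_div, abs_of_pos hR0, div_lt_one hR0]; exact h)
          · exact bb_deriv_zero_outer _ (by
              rw [abs_div, abs_of_pos hR0, lt_div_iff₀ hR0]; linarith)
        simp [hηddef, hd0]
      have hηdsupp : ∀ x : ℝ, ηd x ≠ 0 → R ≤ |x| ∧ |x| ≤ 2 * R := by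
        intro x hx
        constructor
        · by_contra hc; push_neg at hc; exact hx (hηdzero x (Or.inl hc))
        · by_contra hc; push_neg at hc; exact hx (hηdzero x (Or.inr hc))
      clear_value ηf ηd
      set Lx : (ℝ × ℝ × ℝ) →L[ℝ] ℝ := ContinuousLinearMap.fst ℝ ℝ (ℝ × ℝ) with hLx
      set Ly : (ℝ × ℝ × ℝ) →L[ℝ] ℝ :=
        (ContinuousLinearMap.fst ℝ ℝ ℝ).comp (ContinuousLinearMap.snd ℝ ℝ (ℝ × ℝ)) with hLy
      set ψ : ℝ × ℝ × ℝ → ℝ := fun p => ηf p.1 * ηf p.2.1 * T (Φ p) with hψdef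
      set ψ1 : ℝ × ℝ × ℝ → ℝ := fun p =>
        (ηd p.1 * ηf p.2.1) * T (Φ p) + (ηf p.1 * ηf p.2.1) * (θf (Φ p) * Φx p) with hψ1def
      set ψ2 : ℝ × ℝ × ℝ → ℝ := fun p =>
        (ηf p.1 * ηd p.2.1) * T (Φ p) + (ηf p.1 * ηf p.2.1) * (θf (Φ p) * Φy p) with hψ2def
      set ψ3 : ℝ × ℝ × ℝ → ℝ := fun p =>
        (ηf p.1 * ηf p.2.1) * (θf (Φ p) * Φz p) with hψ3def
      set D : ℝ × ℝ × ℝ → ((ℝ × ℝ × ℝ) →L[ℝ] ℝ) := fun p =>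
        (ηf p.1 * ηf p.2.1) • (θf (Φ p) • fderivWithin ℝ Φ Scl p)
          + (T (Φ p)) • ((ηf p.1) • ((ηd p.2.1) • Ly) + (ηf p.2.1) • ((ηd p.1) • Lx))
        with hDdef
      have hψd : ∀ p ∈ Scl, HasFDerivWithinAt ψ (D p) Scl p := by
        intro p hp
        have hx : HasFDerivAt (fun p : ℝ × ℝ × ℝ => ηf p.1) ((ηd p.1) • Lx) p :=
          (hηderiv p.1).comp_hasFDerivAt p (Lx.hasFDerivAt)
        have hy : HasFDerivAt (fun p : ℝ × ℝ × ℝ => ηf p.2.1) ((ηd p.2.1) • Ly) p :=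
          (hηderiv p.2.1).comp_hasFDerivAt p (Ly.hasFDerivAt)
        have hu : HasFDerivAt (fun p : ℝ × ℝ × ℝ => ηf p.1 * ηf p.2.1)
            ((ηf p.1) • ((ηd p.2.1) • Ly) + (ηf p.2.1) • ((ηd p.1) • Lx)) p := hx.mul hy
        have hTΦ : HasFDerivWithinAt (fun p => T (Φ p))
            (θf (Φ p) • fderivWithin ℝ Φ Scl p) Scl p :=
          (hTd (Φ p)).comp_hasFDerivWithinAt p ((hΦd p hp).hasFDerivWithinAt)
        exact hu.hasFDerivWithinAt.mul hTΦ
      have hD1 : ∀ p ∈ Scl, D p (1, 0, 0) = ψ1 p := by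
        intro p hp
        simp only [hDdef, hψ1def, ContinuousLinearMap.add_apply,
          ContinuousLinearMap.smul_apply, ContinuousLinearMap.coe_comp', Function.comp_apply,
          ContinuousLinearMap.coe_fst', ContinuousLinearMap.coe_snd', smul_eq_mul, hLx, hLy]
        rw [← hΦx p]
        ring
      have hD2 : ∀ p ∈ Scl, D p (0, 1, 0) = ψ2 p := by
        intro p hp
        simp only [hDdef, hψ2def, ContinuousLinearMap.add_apply,
          ContinuousLinearMap.smul_apply, ContinuousLinearMap.coe_comp', Function.comp_apply,
          ContinuousLinearMap.coe_fst', ContinuousLinearMap.coe_snd', smul_eq_mul, hLx, hLy]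
        rw [← hΦy p]
        ring
      have hD3 : ∀ p ∈ Scl, D p (0, 0, 1) = ψ3 p := by
        intro p hp
        simp only [hDdef, hψ3def, ContinuousLinearMap.add_apply,
          ContinuousLinearMap.smul_apply, ContinuousLinearMap.coe_comp', Function.comp_apply,
          ContinuousLinearMap.coe_fst', ContinuousLinearMap.coe_snd', smul_eq_mul, hLx, hLy]
        rw [← hΦz p]
        ring
      have hΦcont : ContinuousOn Φ Scl := hΦ.continuousOn
      have hc1 : Continuous (fun p : ℝ × ℝ × ℝ => ηf p.1) := hηcont.comp continuous_fst
      have hc2 : Continuous (fun p : ℝ × ℝ × ℝ => ηf p.2.1) :=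
        hηcont.comp (continuous_fst.comp continuous_snd)
      have hc1d : Continuous (fun p : ℝ × ℝ × ℝ => ηd p.1) := hηdcont.comp continuous_fst
      have hc2d : Continuous (fun p : ℝ × ℝ × ℝ => ηd p.2.1) :=
        hηdcont.comp (continuous_fst.comp continuous_snd)
      have hTΦc : ContinuousOn (fun p : ℝ × ℝ × ℝ => T (Φ p)) Scl :=
        hTc.comp_continuousOn hΦcont
      have hθΦc : ContinuousOn (fun p : ℝ × ℝ × ℝ => θf (Φ p)) Scl :=
        hθc.comp_continuousOn hΦcont
      have hψc : ContinuousOn ψ Scl := ((hc1.mul hc2).continuousOn).mul hTΦc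
      have hψ1c : ContinuousOn ψ1 Scl :=
        (((hc1d.mul hc2).continuousOn).mul hTΦc).add
          (((hc1.mul hc2).continuousOn).mul (hθΦc.mul hΦxc))
      have hψ2c : ContinuousOn ψ2 Scl :=
        (((hc1.mul hc2d).continuousOn).mul hTΦc).add
          (((hc1.mul hc2).continuousOn).mul (hθΦc.mul hΦyc))
      have hψ3c : ContinuousOn ψ3 Scl :=
        ((hc1.mul hc2).continuousOn).mul (hθΦc.mul hΦzc)
      have hρ0 : (0 : ℝ) ≤ 2 * R := by linarith
      have hsupp : ∀ p : ℝ × ℝ × ℝ, 2 * R ≤ max |p.1| |p.2.1| → ψ p = 0 := by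
        intro p hp
        rcases le_max_iff.mp hp with h | h
        · simp [hψdef, hηzero p.1 h]
        · simp [hψdef, hηzero p.2.1 h]
      clear_value ψ ψ1 ψ2 ψ3 D
      have hdiv := divergence_strip μ γ Φ Φx Φy Φz S Scl hS hScl hΦ hΦx hΦy hΦz hlap htop hbot
        ψ ψ1 ψ2 ψ3 D hψd hD1 hD2 hD3 hψc hψ1c hψ2c hψ3c (2 * R) hρ0 hsupp
      have hγ2le : γ ^ 2 ≤ 1 := by
        have := pow_le_pow_left₀ hγ.le hγ1 2
        simpa using this
      have hg2pos : 0 < γ ^ 2 * μ := mul_pos (pow_pos hγ 2) hμ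
      have amgm : ∀ s u : ℝ, 0 ≤ s → s * |u| ≤ δ / 2 * s ^ 2 + 1 / (2 * δ) * u ^ 2 := by
        intro s u hs
        have h2 : 2 * δ * (s * |u|) ≤ δ ^ 2 * s ^ 2 + u ^ 2 := by
          have e := sq_nonneg (δ * s - |u|)
          have e2 : (δ * s - |u|) ^ 2 = δ ^ 2 * s ^ 2 - 2 * δ * (s * |u|) + u ^ 2 := by
            rw [show (δ * s - |u|) ^ 2 = δ ^ 2 * s ^ 2 - 2 * δ * (s * |u|) + |u| ^ 2 by ring,
              sq_abs u]
          rw [e2] at e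
          linarith
        have hpos : 0 < 2 * δ := by linarith
        calc s * |u| = (2 * δ * (s * |u|)) / (2 * δ) := by field_simp
          _ ≤ (δ ^ 2 * s ^ 2 + u ^ 2) / (2 * δ) := by gcongr
          _ = δ / 2 * s ^ 2 + 1 / (2 * δ) * u ^ 2 := by field_simp
      -- split the divergence identity into the good and the bad part
      set P : ℝ × ℝ × ℝ → ℝ := fun p => (ηf p.1 * ηf p.2.1) * θf (Φ p) * w p with hPdef
      set Q : ℝ × ℝ × ℝ → ℝ := fun p => T (Φ p) *
        (μ * (ηd p.1 * ηf p.2.1) * Φx p + γ ^ 2 * μ * (ηf p.1 * ηd p.2.1) * Φy p) with hQdef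
      have hPQ : ∀ p, μ * ψ1 p * Φx p + γ ^ 2 * μ * ψ2 p * Φy p + ψ3 p * Φz p
          = P p + Q p := by
        intro p
        simp only [hψ1def, hψ2def, hψ3def, hPdef, hQdef, hwdef]
        ring
      have hPc : ContinuousOn P Scl := (((hc1.mul hc2).continuousOn).mul hθΦc).mul hwc
      have hQc : ContinuousOn Q Scl := by
        refine hTΦc.mul (ContinuousOn.add ?_ ?_)
        · exact (continuousOn_const.mul ((hc1d.mul hc2).continuousOn)).mul hΦxc
        · exact (continuousOn_const.mul ((hc1.mul hc2d).continuousOn)).mul hΦyc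
      have hPz : ∀ p ∈ S, 2 * R + 1 ≤ max |p.1| |p.2.1| → P p = 0 := by
        intro p _ hp
        rcases le_max_iff.mp hp with h | h
        · have h0 : ηf p.1 = 0 := hηzero p.1 (by linarith)
          simp only [hPdef]; rw [h0]; ring
        · have h0 : ηf p.2.1 = 0 := hηzero p.2.1 (by linarith)
          simp only [hPdef]; rw [h0]; ring
      have hQz : ∀ p ∈ S, 2 * R + 1 ≤ max |p.1| |p.2.1| → Q p = 0 := by
        intro p _ hp
        rcases le_max_iff.mp hp with h | h
        · have h1 : ηd p.1 = 0 := hηdzero p.1 (Or.inr (by linarith))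
          have h2 : ηf p.1 = 0 := hηzero p.1 (by linarith)
          simp only [hQdef]; rw [h1, h2]; ring
        · have h1 : ηd p.2.1 = 0 := hηdzero p.2.1 (Or.inr (by linarith))
          have h2 : ηf p.2.1 = 0 := hηzero p.2.1 (by linarith)
          simp only [hQdef]; rw [h1, h2]; ring
      have hPi : IntegrableOn P S := integrableOn_strip S Scl hS hScl P (2 * R + 1) hPc hPz
      have hQi : IntegrableOn Q S := integrableOn_strip S Scl hS hScl Q (2 * R + 1) hQc hQz
      clear_value P Q
      have hsplit : (∫ p in S, P p) = - ∫ p in S, Q p := by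
        have h1 : (∫ p in S, (P p + Q p)) = 0 := by
          calc (∫ p in S, (P p + Q p))
              = ∫ p in S, (μ * ψ1 p * Φx p + γ ^ 2 * μ * ψ2 p * Φy p + ψ3 p * Φz p) :=
                setIntegral_congr_fun hSmeas (fun p _ => (hPQ p).symm)
            _ = 0 := hdiv
        have h2 : (∫ p in S, (P p + Q p)) = (∫ p in S, P p) + ∫ p in S, Q p :=
          integral_add hPi hQi
        linarith
      -- lower bound by the ball integral
      have hwB_int : IntegrableOn (B.indicator w) S := by
        rw [IntegrableOn, integrable_indicator_iff hBmeas, IntegrableOn,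
          Measure.restrict_restrict hBmeas, inter_eq_left.mpr hBS]
        exact hIB
      have hBP : (∫ p in B, w p) ≤ ∫ p in S, P p := by
        have h0 : (∫ p in B, w p) = ∫ p in S, B.indicator w p := by
          rw [setIntegral_indicator hBmeas, inter_eq_right.mpr hBS]
        rw [h0]
        apply setIntegral_mono_on hwB_int hPi hSmeas
        intro p hpS
        by_cases hpB : p ∈ B
        · rw [indicator_of_mem hpB]
          have hη1 : ηf p.1 = 1 :=
            hηone p.1 (le_trans (le_trans (le_max_left _ _) (hmB p hpB)) hmn)
          have hη2 : ηf p.2.1 = 1 :=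
            hηone p.2.1 (le_trans (le_trans (le_max_right _ _) (hmB p hpB)) hmn)
          have hθ1 : θf (Φ p) = 1 := hθone (Φ p) (by
            have := hMB p hpB; rw [abs_le] at this ⊢; constructor <;> linarith [this.1, this.2])
          simp only [hPdef]; rw [hη1, hη2, hθ1]; simp
        · rw [indicator_of_notMem hpB]
          simp only [hPdef]
          exact mul_nonneg (mul_nonneg (mul_nonneg (hηnn _) (hηnn _)) (hθ0 _)) (hwnn p)
      -- pointwise bound on |Q|
      set Box : Set (ℝ × ℝ × ℝ) :=
        Icc (-(2 * R)) (2 * R) ×ˢ Icc (-(2 * R)) (2 * R) ×ˢ (univ : Set ℝ) with hBoxdef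
      have hBoxmeas : MeasurableSet Box :=
        measurableSet_Icc.prod (measurableSet_Icc.prod MeasurableSet.univ)
      set cst : ℝ := δ * (μ * (M + 2) ^ 2 * (C ^ 2 / R ^ 2)) with hcstdef
      have hcst0 : 0 ≤ cst := by rw [hcstdef]; positivity
      have hQb : ∀ p ∈ S, |Q p| ≤ Box.indicator (fun _ => cst) p
          + 1 / (2 * δ) * (An n).indicator w p := by
        intro p hpS
        have hrhs1 : 0 ≤ Box.indicator (fun _ => cst) p :=
          indicator_nonneg (fun _ _ => hcst0) p
        have hrhs2 : 0 ≤ (An n).indicator w p := indicator_nonneg (fun q _ => hwnn q) p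
        by_cases hz : ηd p.1 * ηf p.2.1 = 0 ∧ ηf p.1 * ηd p.2.1 = 0
        · have hQ0 : Q p = 0 := by
            simp only [hQdef]; rw [hz.1, hz.2]; ring
          rw [hQ0, abs_zero]
          have h3 : 0 ≤ 1 / (2 * δ) * (An n).indicator w p :=
            mul_nonneg (by positivity) hrhs2
          linarith
        · have hBoxAn : p ∈ Box ∧ p ∈ An n := by
            rcases not_and_or.mp hz with h | h
            · have h1 : ηd p.1 ≠ 0 := fun hc => h (by rw [hc]; ring)
              have h2 : ηf p.2.1 ≠ 0 := fun hc => h (by rw [hc]; ring)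
              obtain ⟨ha, hb⟩ := hηdsupp p.1 h1
              have hy2 : |p.2.1| ≤ 2 * R := by
                by_contra hc; push_neg at hc
                exact h2 (hηzero p.2.1 (le_of_lt hc))
              refine ⟨⟨abs_le.mp hb, abs_le.mp hy2, mem_univ _⟩, ?_⟩
              show p ∈ An n
              simp only [hAndef, mem_setOf_eq]
              exact le_trans ha (le_max_left _ _)
            · have h1 : ηf p.1 ≠ 0 := fun hc => h (by rw [hc]; ring)
              have h2 : ηd p.2.1 ≠ 0 := fun hc => h (by rw [hc]; ring)
              obtain ⟨ha, hb⟩ := hηdsupp p.2.1 h2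
              have hy2 : |p.1| ≤ 2 * R := by
                by_contra hc; push_neg at hc
                exact h1 (hηzero p.1 (le_of_lt hc))
              refine ⟨⟨abs_le.mp hy2, abs_le.mp hb, mem_univ _⟩, ?_⟩
              show p ∈ An n
              simp only [hAndef, mem_setOf_eq]
              exact le_trans ha (le_max_right _ _)
          obtain ⟨hpBox, hpAn⟩ := hBoxAn
          rw [indicator_of_mem hpBox, indicator_of_mem hpAn]
          have hta : |T (Φ p) * (ηd p.1 * ηf p.2.1)| ≤ (M + 2) * (C / R) := by
            rw [abs_mul, abs_mul]
            have e1 : |ηd p.1| ≤ C / R := hηdb _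
            have e2 : |ηf p.2.1| ≤ 1 := by rw [abs_of_nonneg (hηnn _)]; exact hηle1 _
            have e4 : |ηd p.1| * |ηf p.2.1| ≤ C / R := by
              calc |ηd p.1| * |ηf p.2.1| ≤ (C / R) * 1 :=
                    mul_le_mul e1 e2 (abs_nonneg _) (by positivity)
                _ = C / R := mul_one _
            exact mul_le_mul (hTb _) e4 (mul_nonneg (abs_nonneg _) (abs_nonneg _))
              (by linarith)
          have htb : |T (Φ p) * (ηf p.1 * ηd p.2.1)| ≤ (M + 2) * (C / R) := by
            rw [abs_mul, abs_mul]
            have e1 : |ηd p.2.1| ≤ C / R := hηdb _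
            have e2 : |ηf p.1| ≤ 1 := by rw [abs_of_nonneg (hηnn _)]; exact hηle1 _
            have e4 : |ηf p.1| * |ηd p.2.1| ≤ C / R := by
              calc |ηf p.1| * |ηd p.2.1| ≤ 1 * (C / R) :=
                    mul_le_mul e2 e1 (abs_nonneg _) (by norm_num)
                _ = C / R := one_mul _
            exact mul_le_mul (hTb _) e4 (mul_nonneg (abs_nonneg _) (abs_nonneg _))
              (by linarith)
          have htri : |Q p| ≤ μ * (|T (Φ p) * (ηd p.1 * ηf p.2.1)| * |Φx p|)
              + γ ^ 2 * μ * (|T (Φ p) * (ηf p.1 * ηd p.2.1)| * |Φy p|) := by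
            simp only [hQdef]
            have e0 : T (Φ p) * (μ * (ηd p.1 * ηf p.2.1) * Φx p
                + γ ^ 2 * μ * (ηf p.1 * ηd p.2.1) * Φy p)
                = μ * ((T (Φ p) * (ηd p.1 * ηf p.2.1)) * Φx p)
                  + γ ^ 2 * μ * ((T (Φ p) * (ηf p.1 * ηd p.2.1)) * Φy p) := by ring
            rw [e0]
            have eA : |μ * ((T (Φ p) * (ηd p.1 * ηf p.2.1)) * Φx p)|
                = μ * (|T (Φ p) * (ηd p.1 * ηf p.2.1)| * |Φx p|) := by
              rw [abs_mul, abs_of_pos hμ, abs_mul]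
            have eB : |γ ^ 2 * μ * ((T (Φ p) * (ηf p.1 * ηd p.2.1)) * Φy p)|
                = γ ^ 2 * μ * (|T (Φ p) * (ηf p.1 * ηd p.2.1)| * |Φy p|) := by
              rw [abs_mul, abs_of_pos hg2pos, abs_mul]
            calc |μ * ((T (Φ p) * (ηd p.1 * ηf p.2.1)) * Φx p)
                + γ ^ 2 * μ * ((T (Φ p) * (ηf p.1 * ηd p.2.1)) * Φy p)|
                ≤ |μ * ((T (Φ p) * (ηd p.1 * ηf p.2.1)) * Φx p)|
                  + |γ ^ 2 * μ * ((T (Φ p) * (ηf p.1 * ηd p.2.1)) * Φy p)| := abs_add_le _ _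
              _ = μ * (|T (Φ p) * (ηd p.1 * ηf p.2.1)| * |Φx p|)
                  + γ ^ 2 * μ * (|T (Φ p) * (ηf p.1 * ηd p.2.1)| * |Φy p|) := by
                  rw [eA, eB]
          have hs1 := amgm (|T (Φ p) * (ηd p.1 * ηf p.2.1)|) (Φx p) (abs_nonneg _)
          have hs2 := amgm (|T (Φ p) * (ηf p.1 * ηd p.2.1)|) (Φy p) (abs_nonneg _)
          have hsq1 : |T (Φ p) * (ηd p.1 * ηf p.2.1)| ^ 2 ≤ ((M + 2) * (C / R)) ^ 2 :=
            pow_le_pow_left₀ (abs_nonneg _) hta 2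
          have hsq2 : |T (Φ p) * (ηf p.1 * ηd p.2.1)| ^ 2 ≤ ((M + 2) * (C / R)) ^ 2 :=
            pow_le_pow_left₀ (abs_nonneg _) htb 2
          have hw_ge : μ * (Φx p) ^ 2 + γ ^ 2 * μ * (Φy p) ^ 2 ≤ w p := by
            simp only [hwdef]
            exact le_add_of_nonneg_right (sq_nonneg _)
          have hst1 : μ * (|T (Φ p) * (ηd p.1 * ηf p.2.1)| * |Φx p|)
              ≤ μ * (δ / 2 * ((M + 2) * (C / R)) ^ 2 + 1 / (2 * δ) * (Φx p) ^ 2) := by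
            apply mul_le_mul_of_nonneg_left _ hμ.le
            refine le_trans hs1 ?_
            have : δ / 2 * |T (Φ p) * (ηd p.1 * ηf p.2.1)| ^ 2
                ≤ δ / 2 * ((M + 2) * (C / R)) ^ 2 :=
              mul_le_mul_of_nonneg_left hsq1 (by positivity)
            linarith
          have hst2 : γ ^ 2 * μ * (|T (Φ p) * (ηf p.1 * ηd p.2.1)| * |Φy p|)
              ≤ γ ^ 2 * μ * (δ / 2 * ((M + 2) * (C / R)) ^ 2 + 1 / (2 * δ) * (Φy p) ^ 2) := by
            apply mul_le_mul_of_nonneg_left _ hg2pos.le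
            refine le_trans hs2 ?_
            have : δ / 2 * |T (Φ p) * (ηf p.1 * ηd p.2.1)| ^ 2
                ≤ δ / 2 * ((M + 2) * (C / R)) ^ 2 :=
              mul_le_mul_of_nonneg_left hsq2 (by positivity)
            linarith
          have hchain : |Q p| ≤ μ * (δ / 2 * ((M + 2) * (C / R)) ^ 2 + 1 / (2 * δ) * (Φx p) ^ 2)
              + γ ^ 2 * μ * (δ / 2 * ((M + 2) * (C / R)) ^ 2 + 1 / (2 * δ) * (Φy p) ^ 2) :=
            le_trans htri (add_le_add hst1 hst2)
          have hrearr : μ * (δ / 2 * ((M + 2) * (C / R)) ^ 2 + 1 / (2 * δ) * (Φx p) ^ 2)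
              + γ ^ 2 * μ * (δ / 2 * ((M + 2) * (C / R)) ^ 2 + 1 / (2 * δ) * (Φy p) ^ 2)
              = (1 + γ ^ 2) * μ * (δ / 2) * ((M + 2) * (C / R)) ^ 2
                + 1 / (2 * δ) * (μ * (Φx p) ^ 2 + γ ^ 2 * μ * (Φy p) ^ 2) := by ring
          have hbound1 : (1 + γ ^ 2) * μ * (δ / 2) * ((M + 2) * (C / R)) ^ 2 ≤ cst := by
            have hfac : (1 + γ ^ 2) * μ * (δ / 2) ≤ δ * μ := by
              have h2 : (1 + γ ^ 2) ≤ 2 := by linarith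
              have h3 : (1 + γ ^ 2) * (μ * (δ / 2)) ≤ 2 * (μ * (δ / 2)) :=
                mul_le_mul_of_nonneg_right h2 (by positivity)
              calc (1 + γ ^ 2) * μ * (δ / 2) = (1 + γ ^ 2) * (μ * (δ / 2)) := by ring
                _ ≤ 2 * (μ * (δ / 2)) := h3
                _ = δ * μ := by ring
            have hfac2 : (1 + γ ^ 2) * μ * (δ / 2) * ((M + 2) * (C / R)) ^ 2
                ≤ (δ * μ) * ((M + 2) * (C / R)) ^ 2 :=
              mul_le_mul_of_nonneg_right hfac (by positivity)
            refine le_trans hfac2 (le_of_eq ?_)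
            rw [hcstdef]
            field_simp
          have hbound2 : 1 / (2 * δ) * (μ * (Φx p) ^ 2 + γ ^ 2 * μ * (Φy p) ^ 2)
              ≤ 1 / (2 * δ) * w p :=
            mul_le_mul_of_nonneg_left hw_ge (by positivity)
          calc |Q p| ≤ (1 + γ ^ 2) * μ * (δ / 2) * ((M + 2) * (C / R)) ^ 2
                + 1 / (2 * δ) * (μ * (Φx p) ^ 2 + γ ^ 2 * μ * (Φy p) ^ 2) := by
                rw [← hrearr]; exact hchain
            _ ≤ cst + 1 / (2 * δ) * w p := add_le_add hbound1 hbound2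
      -- integrate the bound
      have hQabs_i : IntegrableOn (fun p => |Q p|) S := hQi.abs
      have hsubK : Box ∩ S ⊆ Icc (-(2 * R)) (2 * R) ×ˢ Icc (-(2 * R)) (2 * R) ×ˢ
          Icc (-1 : ℝ) 0 := by
        rintro ⟨x, y, z⟩ ⟨hBx, hSx⟩
        have hz : z ∈ Ioo (-1 : ℝ) 0 := by rw [hS] at hSx; exact hSx
        exact ⟨hBx.1, hBx.2.1, Ioo_subset_Icc_self hz⟩
      clear_value Box cst
      have hInd1 : Integrable (Box.indicator (fun _ => cst)) (volume.restrict S) := by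
        rw [integrable_indicator_iff hBoxmeas]
        refine (integrableOn_const_iff).mpr (Or.inr ?_)
        rw [Measure.restrict_apply hBoxmeas]
        exact lt_of_le_of_lt (measure_mono hsubK)
          (isCompact_Icc.prod (isCompact_Icc.prod isCompact_Icc)).measure_lt_top
      have hInd2 : Integrable (fun p => 1 / (2 * δ) * (An n).indicator w p)
          (volume.restrict S) := (hL2.indicator (hAnmeas n)).const_mul _
      have hQIb : (∫ p in S, |Q p|)
          ≤ ∫ p in S, (Box.indicator (fun _ => cst) p
              + 1 / (2 * δ) * (An n).indicator w p) :=
        setIntegral_mono_on hQabs_i (hInd1.add hInd2) hSmeas hQb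
      have hsplit2 : (∫ p in S, (Box.indicator (fun _ => cst) p
          + 1 / (2 * δ) * (An n).indicator w p))
          = (∫ p in S, Box.indicator (fun _ => cst) p) + 1 / (2 * δ) * ε n := by
        rw [integral_add hInd1 hInd2, integral_const_mul, hεdef]
      have hvolK : volume (Icc (-(2 * R)) (2 * R) ×ˢ Icc (-(2 * R)) (2 * R) ×ˢ
          Icc (-1 : ℝ) 0) = ENNReal.ofReal (4 * R) * (ENNReal.ofReal (4 * R)
            * ENNReal.ofReal 1) := by
        rw [show (volume : Measure (ℝ × ℝ × ℝ))
            = (volume : Measure ℝ).prod (volume : Measure (ℝ × ℝ)) from rfl]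
        rw [Measure.prod_prod]
        rw [show (volume : Measure (ℝ × ℝ))
            = (volume : Measure ℝ).prod (volume : Measure ℝ) from rfl]
        rw [Measure.prod_prod, Real.volume_Icc, Real.volume_Icc]
        rw [show (2 * R - -(2 * R)) = 4 * R by ring, show ((0 : ℝ) - -1) = 1 by norm_num]
      have hIndVal : (∫ p in S, Box.indicator (fun _ => cst) p) ≤ δ * K := by
        rw [integral_indicator hBoxmeas, setIntegral_const, smul_eq_mul]
        have hv1 : (volume.restrict S) Box ≤ ENNReal.ofReal (4 * R)
            * (ENNReal.ofReal (4 * R) * ENNReal.ofReal 1) := by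
          rw [Measure.restrict_apply hBoxmeas, ← hvolK]
          exact measure_mono hsubK
        have hfin : ENNReal.ofReal (4 * R) * (ENNReal.ofReal (4 * R) * ENNReal.ofReal 1)
            ≠ ⊤ := by
          exact ENNReal.mul_ne_top ENNReal.ofReal_ne_top
            (ENNReal.mul_ne_top ENNReal.ofReal_ne_top ENNReal.ofReal_ne_top)
        have hv2 : ((volume.restrict S) Box).toReal ≤ 16 * R ^ 2 := by
          calc ((volume.restrict S) Box).toReal
              ≤ (ENNReal.ofReal (4 * R) * (ENNReal.ofReal (4 * R)
                * ENNReal.ofReal 1)).toReal := ENNReal.toReal_mono hfin hv1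
            _ = 16 * R ^ 2 := by
                rw [ENNReal.toReal_mul, ENNReal.toReal_mul,
                  ENNReal.toReal_ofReal (by linarith : (0:ℝ) ≤ 4 * R),
                  ENNReal.toReal_ofReal (by norm_num : (0:ℝ) ≤ 1)]
                ring
        calc ((volume.restrict S) Box).toReal * cst ≤ 16 * R ^ 2 * cst :=
              mul_le_mul_of_nonneg_right hv2 hcst0
          _ = δ * K := by
              rw [hcstdef, hKdef]
              field_simp
      calc c * V ≤ ∫ p in B, w p := hlow
        _ ≤ ∫ p in S, P p := hBP
        _ = - ∫ p in S, Q p := hsplit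
        _ ≤ |∫ p in S, Q p| := neg_le_abs _
        _ ≤ ∫ p in S, |Q p| := by
            have := norm_integral_le_integral_norm (μ := volume.restrict S) Q
            simpa [Real.norm_eq_abs] using this
        _ ≤ ∫ p in S, (Box.indicator (fun _ => cst) p
            + 1 / (2 * δ) * (An n).indicator w p) := hQIb
        _ = (∫ p in S, Box.indicator (fun _ => cst) p) + 1 / (2 * δ) * ε n := hsplit2
        _ ≤ δ * K + 1 / (2 * δ) * ε n := add_le_add_left hIndVal _
    set δ0 := c * V / (2 * K) with hδ0
    have hδ0pos : 0 < δ0 := by rw [hδ0]; positivity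
    clear_value δ0
    have hεsmall : ∀ᶠ n in Filter.atTop, ε n < c * V * δ0 := by
      have hpos : (0 : ℝ) < c * V * δ0 := by positivity
      exact hεlim.eventually_lt_const hpos
    obtain ⟨n, hn1, hn2⟩ := (hεsmall.and (Filter.eventually_ge_atTop (max m 1))).exists
    have hmn : (m : ℝ) ≤ (n : ℝ) := by
      exact_mod_cast le_trans (le_max_left m 1) hn2
    have h1n : 1 ≤ (n : ℝ) := by
      exact_mod_cast le_trans (le_max_right m 1) hn2
    have hmaster := master n hmn h1n δ0 hδ0pos
    have hδ0K : δ0 * K = c * V / 2 := by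
      rw [hδ0]; field_simp
    have hq1 : (1 / (2 * δ0)) * ε n < (1 / (2 * δ0)) * (c * V * δ0) :=
      mul_lt_mul_of_pos_left hn1 (by positivity)
    have hq2 : (1 / (2 * δ0)) * (c * V * δ0) = c * V / 2 := by
      field_simp
    linarith
  intro p hp
  have h := key p hp
  simp only [hwdef] at h
  have h1 : 0 ≤ μ * (Φx p) ^ 2 := mul_nonneg hμ.le (sq_nonneg _)
  have h2 : 0 ≤ γ ^ 2 * μ * (Φy p) ^ 2 :=
    mul_nonneg (mul_nonneg (sq_nonneg γ) hμ.le) (sq_nonneg _)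
  have h3 : 0 ≤ (Φz p) ^ 2 := sq_nonneg _
  have hg2 : 0 < γ ^ 2 * μ := mul_pos (pow_pos hγ 2) hμ
  have hx2 : (Φx p) ^ 2 = 0 := by nlinarith
  have hy2 : (Φy p) ^ 2 = 0 := by nlinarith
  have hz2 : (Φz p) ^ 2 = 0 := by nlinarith
  have hx0 : Φx p = 0 := by
    have := sq_eq_zero_iff.mp hx2; exact this
  have hy0 : Φy p = 0 := by
    have := sq_eq_zero_iff.mp hy2; exact this
  have hz0 : Φz p = 0 := by
    have := sq_eq_zero_iff.mp hz2; exact this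
  exact ⟨by rw [hx0, mul_zero], by rw [hy0, mul_zero], hz0⟩
end

section
/- Let μ > 0 and t > 0, and let u : ℝ → ℂ be continuously differentiable with compact support. Define ω : ℝ → ℝ by ω(ξ) = sqrt(|ξ| · tanh(√μ · |ξ|) / √μ). Then the oscillatory integral ∫_ℝ exp(i (t/ε) ω(ξ)) · u(ξ) dξ tends to 0 as ε tends to 0 from above. -/
open MeasureTheory Filter

private lemma hasDerivAt_tanh' (x : ℝ) :
    HasDerivAt Real.tanh (1 - Real.tanh x ^ 2) x := by
  have h := (Real.hasDerivAt_sinh x).div (Real.hasDerivAt_cosh x) (Real.cosh_pos x).ne'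
  have hfun : (fun y => Real.sinh y / Real.cosh y) = Real.tanh := by
    funext y; rw [Real.tanh_eq_sinh_div_cosh]
  rw [show (Real.sinh / Real.cosh) = Real.tanh from hfun] at h
  refine h.congr_deriv ?_
  have hc := (Real.cosh_pos x).ne'
  have hid : Real.cosh x ^ 2 - Real.sinh x ^ 2 = 1 := Real.cosh_sq_sub_sinh_sq x
  rw [Real.tanh_eq_sinh_div_cosh]
  field_simp

private lemma tanh_pos' {x : ℝ} (hx : 0 < x) : 0 < Real.tanh x := by
  rw [Real.tanh_eq_sinh_div_cosh]
  exact div_pos (Real.sinh_pos_iff.mpr hx) (Real.cosh_pos x)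

private lemma tanh_lt_one' (x : ℝ) : Real.tanh x < 1 := by
  rw [Real.tanh_eq_sinh_div_cosh]
  exact (div_lt_one (Real.cosh_pos x)).mpr (Real.sinh_lt_cosh x)

/-- Half-line oscillatory integral tends to zero as the frequency tends to `∞`. -/
private lemma aux_half (μ : ℝ) (hμ : 0 < μ) (ω : ℝ → ℝ)
    (hω : ∀ ξ : ℝ,
      ω ξ = Real.sqrt (|ξ| * Real.tanh (Real.sqrt μ * |ξ|) / Real.sqrt μ))
    (w : ℝ → ℂ) :
    Tendsto (fun lam : ℝ => ∫ ξ in Set.Ioi (0:ℝ),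
        Complex.exp (Complex.I * ((lam * ω ξ : ℝ) : ℂ)) * w ξ)
      atTop (nhds 0) := by
  set c : ℝ := Real.sqrt μ with hcdef
  have hc : 0 < c := Real.sqrt_pos.mpr hμ
  set h : ℝ → ℝ := fun x => x * Real.tanh (c * x) / c with hh_def
  set h' : ℝ → ℝ := fun x =>
    (1 * Real.tanh (c * x) + x * ((1 - Real.tanh (c * x) ^ 2) * (c * 1))) / c with hh'_def
  set D : ℝ → ℝ := fun x => 1 / (2 * Real.sqrt (h x)) * h' x with hD_def
  have hh : ∀ x : ℝ, HasDerivAt h (h' x) x := by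
    intro x
    have inner : HasDerivAt (fun y : ℝ => c * y) (c * 1) x :=
      (hasDerivAt_id x).const_mul c
    have htanh : HasDerivAt (fun y : ℝ => Real.tanh (c * y))
        ((1 - Real.tanh (c * x) ^ 2) * (c * 1)) x :=
      (hasDerivAt_tanh' (c * x)).comp x inner
    exact ((hasDerivAt_id x).mul htanh).div_const c
  have hpos : ∀ x ∈ Set.Ioi (0:ℝ), 0 < h x := by
    intro x hx
    exact div_pos (mul_pos hx (tanh_pos' (mul_pos hc hx))) hc
  have hD : ∀ x ∈ Set.Ioi (0:ℝ), 0 < D x := by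
    intro x hx
    have ht1 := tanh_pos' (mul_pos hc hx)
    have ht2 := tanh_lt_one' (c * x)
    have hsq : Real.tanh (c * x) ^ 2 < 1 := by nlinarith
    have hh' : 0 < h' x := by
      have hx0 : 0 < x := Set.mem_Ioi.mp hx
      have : 0 < 1 * Real.tanh (c * x) + x * ((1 - Real.tanh (c * x) ^ 2) * (c * 1)) := by
        nlinarith [mul_pos hx0 (mul_pos (sub_pos.mpr hsq) hc)]
      exact div_pos this hc
    have := Real.sqrt_pos.mpr (hpos x hx)
    positivity
  have hωD : ∀ x ∈ Set.Ioi (0:ℝ), HasDerivAt ω (D x) x := by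
    intro x hx
    have hsqrt : HasDerivAt (fun y => Real.sqrt (h y)) (D x) x :=
      (Real.hasDerivAt_sqrt (hpos x hx).ne').comp x (hh x)
    apply hsqrt.congr_of_eventuallyEq
    filter_upwards [isOpen_Ioi.mem_nhds hx] with y hy
    rw [hω y, abs_of_pos (Set.mem_Ioi.mp hy)]
  have hcont : Continuous ω := by
    have : ω = fun ξ => Real.sqrt (|ξ| * Real.tanh (c * |ξ|) / c) := funext hω
    rw [this]
    have htanh : Continuous Real.tanh := by
      have : Real.tanh = fun y => Real.sinh y / Real.cosh y := by
        funext y; rw [Real.tanh_eq_sinh_div_cosh]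
      rw [this]
      exact Real.continuous_sinh.div Real.continuous_cosh fun y => (Real.cosh_pos y).ne'
    exact Real.continuous_sqrt.comp
      (((continuous_abs.mul (htanh.comp (continuous_const.mul continuous_abs)))).div_const c)
  have hmono : StrictMonoOn ω (Set.Ioi 0) := by
    apply strictMonoOn_of_deriv_pos (convex_Ioi 0) hcont.continuousOn
    intro x hx
    rw [interior_Ioi] at hx
    rw [(hωD x hx).deriv]
    exact hD x hx
  have hinj : Set.InjOn ω (Set.Ioi 0) := hmono.injOn
  have himg : MeasurableSet (ω '' Set.Ioi 0) :=
    measurableSet_Ioi.image_of_continuousOn_injOn hcont.continuousOn hinj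
  set ψ : ℝ → ℝ := Function.invFunOn ω (Set.Ioi 0) with hψdef
  have hψ : ∀ x ∈ Set.Ioi (0:ℝ), ψ (ω x) = x := fun x hx => hinj.leftInvOn_invFunOn hx
  set v : ℝ → ℂ := fun s => w (ψ s) / (D (ψ s) : ℂ) with hvdef
  set V : ℝ → ℂ := (ω '' Set.Ioi 0).indicator v with hVdef
  have key : ∀ lam : ℝ,
      (∫ ξ in Set.Ioi (0:ℝ), Complex.exp (Complex.I * ((lam * ω ξ : ℝ) : ℂ)) * w ξ)
        = ∫ s : ℝ, Real.fourierChar (-(s * (-(lam / (2 * Real.pi))))) • V s := by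
    intro lam
    have h1 : ∀ s : ℝ, (Real.fourierChar (-(s * (-(lam / (2 * Real.pi))))) : ℂ)
        = Complex.exp (Complex.I * ((lam * s : ℝ) : ℂ)) := by
      intro s
      rw [Real.fourierChar_apply]
      congr 1
      have hπ : (Real.pi : ℂ) ≠ 0 := by exact_mod_cast Real.pi_ne_zero
      push_cast
      field_simp
    calc
      (∫ ξ in Set.Ioi (0:ℝ), Complex.exp (Complex.I * ((lam * ω ξ : ℝ) : ℂ)) * w ξ)
          = ∫ ξ in Set.Ioi (0:ℝ),
              |D ξ| • ((fun s => Complex.exp (Complex.I * ((lam * s : ℝ) : ℂ)) * V s) (ω ξ)) := by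
            refine setIntegral_congr_fun measurableSet_Ioi (fun ξ hξ => ?_)
            have hmem : ω ξ ∈ ω '' Set.Ioi 0 := Set.mem_image_of_mem _ hξ
            have hVval : V (ω ξ) = w ξ / (D ξ : ℂ) := by
              rw [hVdef, Set.indicator_of_mem hmem, hvdef]
              simp only [hψ ξ hξ]
            simp only [hVval]
            rw [Complex.real_smul, abs_of_pos (hD ξ hξ)]
            have hD0 : (D ξ : ℂ) ≠ 0 := by exact_mod_cast (hD ξ hξ).ne'
            field_simp
      _ = ∫ s in ω '' Set.Ioi 0, Complex.exp (Complex.I * ((lam * s : ℝ) : ℂ)) * V s :=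
            (integral_image_eq_integral_abs_deriv_smul measurableSet_Ioi
              (fun x hx => (hωD x hx).hasDerivWithinAt) hinj (fun s => Complex.exp (Complex.I * ((lam * s : ℝ) : ℂ)) * V s)).symm
      _ = ∫ s : ℝ, Complex.exp (Complex.I * ((lam * s : ℝ) : ℂ)) * V s := by
            rw [← integral_indicator himg]
            congr 1
            funext s
            by_cases hs : s ∈ ω '' Set.Ioi 0
            · rw [Set.indicator_of_mem hs]
            · rw [Set.indicator_of_notMem hs, hVdef, Set.indicator_of_notMem hs, mul_zero]
      _ = ∫ s : ℝ, Real.fourierChar (-(s * (-(lam / (2 * Real.pi))))) • V s := by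
            congr 1
            funext s
            rw [Circle.smul_def, smul_eq_mul, h1 s]
  have hmap : Tendsto (fun lam : ℝ => -(lam / (2 * Real.pi))) atTop (cocompact ℝ) := by
    have h1 : Tendsto (fun lam : ℝ => lam / (2 * Real.pi)) atTop atTop :=
      Tendsto.atTop_div_const (by positivity) tendsto_id
    have h2 : Tendsto (fun lam : ℝ => -(lam / (2 * Real.pi))) atTop atBot :=
      tendsto_neg_atTop_atBot.comp h1
    rw [cocompact_eq_atBot_atTop]
    exact h2.mono_right le_sup_left
  have hRL := (Real.tendsto_integral_exp_smul_cocompact V).comp hmap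
  exact Tendsto.congr (fun lam => (key lam).symm) hRL

/-- Non-stationary phase for the water-waves dispersion relation in
dimension `d = 1`: the oscillatory integral tends to `0` as `ε → 0⁺`. -/
theorem oscillatory_integral_tendsto_zero_dim1
    (μ t : ℝ) (hμ : 0 < μ) (ht : 0 < t)
    (u : ℝ → ℂ) (hu : ContDiff ℝ 1 u) (husupp : HasCompactSupport u)
    (ω : ℝ → ℝ)
    (hω : ∀ ξ : ℝ,
      ω ξ = Real.sqrt (|ξ| * Real.tanh (Real.sqrt μ * |ξ|) / Real.sqrt μ)) :
    Tendsto
      (fun ε : ℝ => ∫ ξ : ℝ,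
        Complex.exp (Complex.I * (((t / ε) * ω ξ : ℝ) : ℂ)) * u ξ)
      (nhdsWithin 0 (Set.Ioi 0)) (nhds 0) := by
  have hωeven : ∀ ξ : ℝ, ω (-ξ) = ω ξ := by
    intro ξ; rw [hω, hω, abs_neg]
  have hcont : Continuous ω := by
    have : ω = fun ξ => Real.sqrt (|ξ| * Real.tanh (Real.sqrt μ * |ξ|) / Real.sqrt μ) :=
      funext hω
    rw [this]
    have htanh : Continuous Real.tanh := by
      have : Real.tanh = fun y => Real.sinh y / Real.cosh y := by
        funext y; rw [Real.tanh_eq_sinh_div_cosh]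
      rw [this]
      exact Real.continuous_sinh.div Real.continuous_cosh fun y => (Real.cosh_pos y).ne'
    exact Real.continuous_sqrt.comp
      (((continuous_abs.mul
        (htanh.comp (continuous_const.mul continuous_abs)))).div_const (Real.sqrt μ))
  have hdiv : Tendsto (fun ε : ℝ => t / ε) (nhdsWithin 0 (Set.Ioi 0)) atTop := by
    simp only [div_eq_mul_inv]
    exact Tendsto.const_mul_atTop ht tendsto_inv_nhdsGT_zero
  have T1 := (aux_half μ hμ ω hω (fun ξ => u (-ξ))).comp hdiv
  have T2 := (aux_half μ hμ ω hω u).comp hdiv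
  have Tsum := T1.add T2
  rw [add_zero] at Tsum
  refine Tsum.congr (fun ε => ?_)
  -- integrability of the full integrand
  have hint : Integrable (fun ξ : ℝ =>
      Complex.exp (Complex.I * (((t / ε) * ω ξ : ℝ) : ℂ)) * u ξ) := by
    have hcontf : Continuous (fun ξ : ℝ =>
        Complex.exp (Complex.I * (((t / ε) * ω ξ : ℝ) : ℂ)) * u ξ) := by
      apply Continuous.mul _ hu.continuous
      exact Complex.continuous_exp.comp
        (continuous_const.mul (Complex.continuous_ofReal.comp (continuous_const.mul hcont)))
    have hsupp : HasCompactSupport (fun ξ : ℝ =>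
        Complex.exp (Complex.I * (((t / ε) * ω ξ : ℝ) : ℂ)) * u ξ) :=
      husupp.mul_left
    exact hcontf.integrable_of_hasCompactSupport hsupp
  have hsplit : (∫ ξ : ℝ, Complex.exp (Complex.I * (((t / ε) * ω ξ : ℝ) : ℂ)) * u ξ)
      = (∫ ξ in Set.Iic (0:ℝ), Complex.exp (Complex.I * (((t / ε) * ω ξ : ℝ) : ℂ)) * u ξ)
        + ∫ ξ in Set.Ioi (0:ℝ), Complex.exp (Complex.I * (((t / ε) * ω ξ : ℝ) : ℂ)) * u ξ :=
    (intervalIntegral.integral_Iic_add_Ioi hint.integrableOn hint.integrableOn).symm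
  have hneg : (∫ ξ in Set.Iic (0:ℝ),
      Complex.exp (Complex.I * (((t / ε) * ω ξ : ℝ) : ℂ)) * u ξ)
      = ∫ ξ in Set.Ioi (0:ℝ),
        Complex.exp (Complex.I * (((t / ε) * ω ξ : ℝ) : ℂ)) * u (-ξ) := by
    have := integral_comp_neg_Ioi (0:ℝ) (fun ξ : ℝ =>
      Complex.exp (Complex.I * (((t / ε) * ω ξ : ℝ) : ℂ)) * u ξ)
    rw [neg_zero] at this
    rw [← this]
    refine setIntegral_congr_fun measurableSet_Ioi (fun ξ _ => ?_)
    rw [hωeven ξ]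
  simp only [Function.comp]
  rw [hsplit, hneg]
end

section
/- For ξ ∈ ℝ² with ξ ≠ 0 and j ∈ {1, 2}, define F_j(ξ) = 2 ξ_j · sqrt(|ξ| · tanh|ξ|) / ( |ξ| · tanh|ξ| + (1 − tanh²|ξ|) · |ξ|² ). Then F_j is bounded on the punctured unit ball { ξ ∈ ℝ² : 0 < |ξ| ≤ 1 }; i.e., there exists C > 0 such that |F_j(ξ)| ≤ C whenever 0 < |ξ| ≤ 1. -/
lemma euclid_coord_le_norm (ξ : EuclideanSpace ℝ (Fin 2)) (j : Fin 2) :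
    |ξ j| ≤ ‖ξ‖ := by
  rw [EuclideanSpace.norm_eq]
  have h1 : |ξ j| = Real.sqrt (‖ξ j‖ ^ 2) := by
    rw [Real.sqrt_sq_eq_abs, abs_norm, Real.norm_eq_abs]
  rw [h1]
  apply Real.sqrt_le_sqrt
  exact Finset.single_le_sum (f := fun i => ‖ξ i‖ ^ 2)
    (fun i _ => by positivity) (Finset.mem_univ j)

/-- The vector field `F_j = (1/|∇ω|²) ∂_{ξ_j} ω` used in the non-stationary
phase argument for the water-waves dispersion relation in dimension `2`
is bounded on the punctured unit ball. -/
theorem nonstationary_phase_field_bounded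
    (F : Fin 2 → EuclideanSpace ℝ (Fin 2) → ℝ)
    (hF : ∀ (j : Fin 2) (ξ : EuclideanSpace ℝ (Fin 2)), ξ ≠ 0 →
      F j ξ = 2 * ξ j * Real.sqrt (‖ξ‖ * Real.tanh ‖ξ‖) /
        (‖ξ‖ * Real.tanh ‖ξ‖ + (1 - Real.tanh ‖ξ‖ ^ 2) * ‖ξ‖ ^ 2)) :
    ∃ C : ℝ, 0 < C ∧ ∀ (j : Fin 2) (ξ : EuclideanSpace ℝ (Fin 2)),
      ξ ≠ 0 → ‖ξ‖ ≤ 1 → |F j ξ| ≤ C := by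
  refine ⟨2 * Real.sqrt (Real.cosh 1), by positivity, fun j ξ hξ hξ1 => ?_⟩
  rw [hF j ξ hξ]
  set r := ‖ξ‖ with hr
  have hr0 : 0 < r := norm_pos_iff.mpr hξ
  set t := Real.tanh r with htdef
  have hsinh : r < Real.sinh r := Real.self_lt_sinh_iff.mpr hr0
  have hcosh : (0:ℝ) < Real.cosh r := Real.cosh_pos r
  have ht0 : 0 < t := by
    rw [htdef, Real.tanh_eq_sinh_div_cosh]
    exact div_pos (Real.sinh_pos_iff.mpr hr0) hcosh
  have ht1 : t < 1 := by
    rw [htdef, Real.tanh_eq_sinh_div_cosh]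
    exact (div_lt_one hcosh).mpr (Real.sinh_lt_cosh r)
  have hcosh1 : (0:ℝ) < Real.cosh 1 := Real.cosh_pos 1
  have htlb : r / Real.cosh 1 ≤ t := by
    rw [htdef, Real.tanh_eq_sinh_div_cosh]
    have hcc : Real.cosh r ≤ Real.cosh 1 := by
      rw [Real.cosh_le_cosh, abs_of_pos hr0, abs_one]; exact hξ1
    calc r / Real.cosh 1 ≤ Real.sinh r / Real.cosh 1 := by gcongr
      _ ≤ Real.sinh r / Real.cosh r := by
          gcongr
          all_goals first | exact le_trans hr0.le hsinh.le | exact hcc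
  -- denominator bounds
  have hD1 : 0 < r * t := mul_pos hr0 ht0
  have hD : r * t ≤ r * t + (1 - t ^ 2) * r ^ 2 := by
    have h2 : 0 ≤ (1 - t ^ 2) * r ^ 2 := mul_nonneg (by nlinarith) (sq_nonneg r)
    linarith
  have hDpos : 0 < r * t + (1 - t ^ 2) * r ^ 2 := lt_of_lt_of_le hD1 hD
  have hs : (0:ℝ) ≤ Real.sqrt (r * t) := Real.sqrt_nonneg _
  -- bound the fraction
  rw [abs_div, abs_of_pos hDpos, abs_mul, abs_mul, abs_two,
    abs_of_nonneg hs]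
  have step1 : 2 * |ξ j| * Real.sqrt (r * t) / (r * t + (1 - t ^ 2) * r ^ 2)
      ≤ 2 * r * Real.sqrt (r * t) / (r * t) := by
    gcongr
    · exact euclid_coord_le_norm ξ j
  have step2 : 2 * r * Real.sqrt (r * t) / (r * t) = 2 * Real.sqrt (r * t) / t := by
    field_simp
  have hsq : Real.sqrt (r * t) ≤ Real.sqrt (Real.cosh 1) * t := by
    have h1 : r * t ≤ Real.cosh 1 * t ^ 2 := by
      have := (div_le_iff₀ hcosh1).mp htlb
      nlinarith
    calc Real.sqrt (r * t) ≤ Real.sqrt (Real.cosh 1 * t ^ 2) := Real.sqrt_le_sqrt h1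
      _ = Real.sqrt (Real.cosh 1) * t := by
          rw [Real.sqrt_mul hcosh1.le, Real.sqrt_sq ht0.le]
  have step3 : 2 * Real.sqrt (r * t) / t ≤ 2 * Real.sqrt (Real.cosh 1) := by
    rw [div_le_iff₀ ht0]
    nlinarith
  calc 2 * |ξ j| * Real.sqrt (r * t) / (r * t + (1 - t ^ 2) * r ^ 2)
      ≤ 2 * r * Real.sqrt (r * t) / (r * t) := step1
    _ = 2 * Real.sqrt (r * t) / t := step2
    _ ≤ 2 * Real.sqrt (Real.cosh 1) := step3
end
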